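/- arXiv:1406.4718 — 6 statements merged into one kernel-verified Lean document; each statement's English description precedes it below -/
import Mathlib

section
/- Let G and G' be finite simple graphs with colourings c : V(G) → {1,…,k} and c' : V(G') → {1,…,k}. Let H be the graph obtained from G by adding, for each vertex v ∈ V(G), c(v)+1 new vertices u^v_1,…,u^v_{c(v)+1} together with edges making v, u^v_1, …, u^v_{c(v)+1} into a simple cycle of length c(v)+2; let H' be obtained from G' and c' analogously. Then (G,c) and (G',c') are isomorphic as coloured graphs if and only if H and H' are isomorphic as (uncoloured) graphs. -/
open SimpleGraph

/-- The graph `H` obtained from a coloured graph `(G, c)` by adding, for each vertex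
`v`, the `c v + 1` new vertices `u^v_0, …, u^v_{c v}` together with edges making
`v, u^v_0, …, u^v_{c v}` into a cycle of length `c v + 2`. -/
def cycleAug {V : Type*} (G : SimpleGraph V) (c : V → ℕ) :
    SimpleGraph (V ⊕ (Σ v : V, Fin (c v + 1))) :=
  SimpleGraph.fromRel fun a b =>
    (∃ u v, G.Adj u v ∧ a = Sum.inl u ∧ b = Sum.inl v) ∨
    (∃ v, a = Sum.inl v ∧ b = Sum.inr ⟨v, 0⟩) ∨
    (∃ v, a = Sum.inl v ∧ b = Sum.inr ⟨v, Fin.last (c v)⟩) ∨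
    (∃ v, ∃ i : Fin (c v), a = Sum.inr ⟨v, i.castSucc⟩ ∧ b = Sum.inr ⟨v, i.succ⟩)

namespace CycleAugAux

open Sum

variable {V : Type*} {G : SimpleGraph V} {c : V → ℕ}

lemma sigma_mk_eq_iff {v w : V} {i : Fin (c v + 1)} {j : Fin (c w + 1)} :
    (⟨v, i⟩ : Σ x : V, Fin (c x + 1)) = ⟨w, j⟩ ↔ v = w ∧ i.val = j.val := by
  constructor
  · intro h
    obtain ⟨h1, h2⟩ := Sigma.mk.inj_iff.mp h
    subst h1
    exact ⟨rfl, congrArg Fin.val (eq_of_heq h2)⟩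
  · rintro ⟨rfl, h⟩
    exact congrArg _ (Fin.ext h)

lemma adj_inl_inl {u v : V} :
    (cycleAug G c).Adj (inl u) (inl v) ↔ G.Adj u v := by
  rw [cycleAug, fromRel_adj]
  constructor
  · rintro ⟨hne, h | h⟩ <;>
      rcases h with (⟨x, y, hxy, hx, hy⟩ | ⟨x, hx, hy⟩ | ⟨x, hx, hy⟩ | ⟨x, i, hx, hy⟩)
    · obtain rfl := inl.inj hx; obtain rfl := inl.inj hy; exact hxy
    · exact absurd hy (by simp)
    · exact absurd hy (by simp)
    · exact absurd hx (by simp)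
    · obtain rfl := inl.inj hx; obtain rfl := inl.inj hy; exact hxy.symm
    · exact absurd hy (by simp)
    · exact absurd hy (by simp)
    · exact absurd hx (by simp)
  · intro h
    exact ⟨by simp [h.ne], Or.inl (Or.inl ⟨u, v, h, rfl, rfl⟩)⟩

lemma adj_inl_inr {v w : V} {i : Fin (c w + 1)} :
    (cycleAug G c).Adj (inl v) (inr ⟨w, i⟩) ↔ w = v ∧ (i.val = 0 ∨ i.val = c w) := by
  rw [cycleAug, fromRel_adj]
  constructor
  · rintro ⟨hne, h | h⟩ <;>
      rcases h with (⟨x, y, hxy, hx, hy⟩ | ⟨x, hx, hy⟩ | ⟨x, hx, hy⟩ | ⟨x, j, hx, hy⟩)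
    · exact absurd hy (by simp)
    · obtain rfl := inl.inj hx
      obtain ⟨rfl, h2⟩ := sigma_mk_eq_iff.mp (inr.inj hy)
      exact ⟨rfl, Or.inl (by simpa using h2)⟩
    · obtain rfl := inl.inj hx
      obtain ⟨rfl, h2⟩ := sigma_mk_eq_iff.mp (inr.inj hy)
      exact ⟨rfl, Or.inr (by simpa [Fin.last] using h2)⟩
    · exact absurd hx (by simp)
    · exact absurd hx (by simp)
    · exact absurd hx (by simp)
    · exact absurd hx (by simp)
    · exact absurd hy (by simp)
  · rintro ⟨rfl, h | h⟩
    · refine ⟨by simp, Or.inl (Or.inr (Or.inl ⟨w, rfl, ?_⟩))⟩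
      exact congrArg _ (sigma_mk_eq_iff.mpr ⟨rfl, by simpa using h⟩)
    · refine ⟨by simp, Or.inl (Or.inr (Or.inr (Or.inl ⟨w, rfl, ?_⟩)))⟩
      exact congrArg _ (sigma_mk_eq_iff.mpr ⟨rfl, by simpa [Fin.last] using h⟩)

lemma adj_inr_inr {v w : V} {i : Fin (c v + 1)} {j : Fin (c w + 1)} :
    (cycleAug G c).Adj (inr ⟨v, i⟩) (inr ⟨w, j⟩) ↔
      v = w ∧ (i.val + 1 = j.val ∨ j.val + 1 = i.val) := by
  rw [cycleAug, fromRel_adj]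
  constructor
  · rintro ⟨hne, h | h⟩ <;>
      rcases h with (⟨x, y, hxy, hx, hy⟩ | ⟨x, hx, hy⟩ | ⟨x, hx, hy⟩ | ⟨x, l, hx, hy⟩)
    · exact absurd hx (by simp)
    · exact absurd hx (by simp)
    · exact absurd hx (by simp)
    · obtain ⟨rfl, h1⟩ := sigma_mk_eq_iff.mp (inr.inj hx)
      obtain ⟨rfl, h2⟩ := sigma_mk_eq_iff.mp (inr.inj hy)
      refine ⟨rfl, Or.inl ?_⟩
      simp only [Fin.coe_castSucc] at h1
      simp only [Fin.val_succ] at h2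
      omega
    · exact absurd hx (by simp)
    · exact absurd hx (by simp)
    · exact absurd hx (by simp)
    · obtain ⟨rfl, h1⟩ := sigma_mk_eq_iff.mp (inr.inj hx)
      obtain ⟨rfl, h2⟩ := sigma_mk_eq_iff.mp (inr.inj hy)
      refine ⟨rfl, Or.inr ?_⟩
      simp only [Fin.coe_castSucc] at h1
      simp only [Fin.val_succ] at h2
      omega
  · rintro ⟨rfl, h | h⟩
    · have hlt : i.val < c v := by have := j.isLt; omega
      refine ⟨?_, Or.inl (Or.inr (Or.inr (Or.inr ⟨v, ⟨i.val, hlt⟩, ?_, ?_⟩)))⟩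
      · intro hh
        obtain ⟨-, h2⟩ := sigma_mk_eq_iff.mp (inr.inj hh)
        omega
      · exact congrArg _ (sigma_mk_eq_iff.mpr ⟨rfl, by simp⟩)
      · exact congrArg _ (sigma_mk_eq_iff.mpr ⟨rfl, by simp [Fin.val_succ]; omega⟩)
    · have hlt : j.val < c v := by have := i.isLt; omega
      refine ⟨?_, Or.inr (Or.inr (Or.inr (Or.inr ⟨v, ⟨j.val, hlt⟩, ?_, ?_⟩)))⟩
      · intro hh
        obtain ⟨-, h2⟩ := sigma_mk_eq_iff.mp (inr.inj hh)
        omega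
      · exact congrArg _ (sigma_mk_eq_iff.mpr ⟨rfl, by simp⟩)
      · exact congrArg _ (sigma_mk_eq_iff.mpr ⟨rfl, by simp [Fin.val_succ]; omega⟩)

end CycleAugAux

namespace CycleAugAux

open Sum

variable {V : Type*} {G : SimpleGraph V} {c : V → ℕ}

/-- the "previous" neighbour of a gadget vertex -/
def pnbr (v : V) (i : Fin (c v + 1)) : V ⊕ Σ x : V, Fin (c x + 1) :=
  if i.val = 0 then inl v else inr ⟨v, ⟨i.val - 1, by have := i.isLt; omega⟩⟩

/-- the "next" neighbour of a gadget vertex -/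
def snbr (v : V) (i : Fin (c v + 1)) : V ⊕ Σ x : V, Fin (c x + 1) :=
  if h : i.val = c v then inl v else inr ⟨v, ⟨i.val + 1, by have := i.isLt; omega⟩⟩

lemma pnbr_ne_snbr {v : V} (hc1 : 1 ≤ c v) (i : Fin (c v + 1)) :
    pnbr (c := c) v i ≠ snbr v i := by
  unfold pnbr snbr
  split_ifs with h1 h2 h2
  · exfalso; omega
  · simp
  · simp
  · intro h
    obtain ⟨-, hv⟩ := sigma_mk_eq_iff.mp (inr.inj h)
    simp only at hv
    omega

lemma nbhd_inr {v : V} (hc1 : 1 ≤ c v) (i : Fin (c v + 1)) :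
    (cycleAug G c).neighborSet (inr ⟨v, i⟩) = {pnbr v i, snbr v i} := by
  ext b
  simp only [mem_neighborSet, Set.mem_insert_iff, Set.mem_singleton_iff]
  constructor
  · intro hadj
    cases b with
    | inl u =>
      rw [adj_comm, adj_inl_inr] at hadj
      obtain ⟨rfl, h | h⟩ := hadj
      · left; unfold pnbr; rw [if_pos h]
      · right; unfold snbr; rw [dif_pos h]
    | inr q =>
      obtain ⟨w, j⟩ := q
      rw [adj_inr_inr] at hadj
      obtain ⟨rfl, h | h⟩ := hadj
      · right; unfold snbr
        rw [dif_neg (by have := j.isLt; omega)]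
        exact congrArg _ (sigma_mk_eq_iff.mpr ⟨rfl, by simp; omega⟩)
      · left; unfold pnbr
        rw [if_neg (by omega)]
        exact congrArg _ (sigma_mk_eq_iff.mpr ⟨rfl, by simp; omega⟩)
  · intro h
    rcases h with rfl | rfl
    · unfold pnbr
      split_ifs with h1
      · rw [adj_comm, adj_inl_inr]; exact ⟨rfl, Or.inl h1⟩
      · rw [adj_inr_inr]; exact ⟨rfl, Or.inr (by simp; omega)⟩
    · unfold snbr
      split_ifs with h1
      · rw [adj_comm, adj_inl_inr]; exact ⟨rfl, Or.inr h1⟩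
      · rw [adj_inr_inr]; exact ⟨rfl, Or.inl (by simp)⟩

/-- degree function via ncard -/
noncomputable def dg (G : SimpleGraph V) (c : V → ℕ) (x : V ⊕ Σ v : V, Fin (c v + 1)) : ℕ :=
  ((cycleAug G c).neighborSet x).ncard

lemma dg_inr {v : V} (hc1 : 1 ≤ c v) (i : Fin (c v + 1)) :
    dg G c (inr ⟨v, i⟩) = 2 := by
  rw [dg, nbhd_inr hc1]
  exact Set.ncard_pair (pnbr_ne_snbr hc1 i)

lemma nbhd_inl_isolated {v : V} (h : ∀ u, ¬ G.Adj v u) :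
    (cycleAug G c).neighborSet (inl v) =
      {inr ⟨v, (0 : Fin (c v + 1))⟩, inr ⟨v, Fin.last (c v)⟩} := by
  ext b
  simp only [mem_neighborSet, Set.mem_insert_iff, Set.mem_singleton_iff]
  constructor
  · intro hadj
    cases b with
    | inl u => exact absurd (adj_inl_inl.mp hadj) (h u)
    | inr q =>
      obtain ⟨w, j⟩ := q
      rw [adj_inl_inr] at hadj
      obtain ⟨rfl, h1 | h1⟩ := hadj
      · left; exact congrArg _ (sigma_mk_eq_iff.mpr ⟨rfl, by simpa using h1⟩)
      · right; exact congrArg _ (sigma_mk_eq_iff.mpr ⟨rfl, by simpa [Fin.last] using h1⟩)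
  · rintro (rfl | rfl)
    · rw [adj_inl_inr]; exact ⟨rfl, Or.inl rfl⟩
    · rw [adj_inl_inr]; exact ⟨rfl, Or.inr (by simp [Fin.last])⟩

lemma dg_inl_isolated {v : V} (hc1 : 1 ≤ c v) (h : ∀ u, ¬ G.Adj v u) :
    dg G c (inl v) = 2 := by
  rw [dg, nbhd_inl_isolated h]
  refine Set.ncard_pair ?_
  intro hh
  obtain ⟨-, hv⟩ := sigma_mk_eq_iff.mp (inr.inj hh)
  simp [Fin.last] at hv
  omega

variable [Finite V] in
lemma dg_inl_nonisolated {v u : V} (hc1 : 1 ≤ c v) (h : G.Adj v u) :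
    3 ≤ dg G c (inl v) := by
  have hsub : ({inl u, inr ⟨v, (0 : Fin (c v + 1))⟩, inr ⟨v, Fin.last (c v)⟩} :
      Set (V ⊕ Σ x : V, Fin (c x + 1))) ⊆ (cycleAug G c).neighborSet (inl v) := by
    rintro b (rfl | rfl | rfl)
    · exact adj_inl_inl.mpr h
    · exact adj_inl_inr.mpr ⟨rfl, Or.inl rfl⟩
    · exact adj_inl_inr.mpr ⟨rfl, Or.inr (by simp [Fin.last])⟩
  have h3 : ({inl u, inr ⟨v, (0 : Fin (c v + 1))⟩, inr ⟨v, Fin.last (c v)⟩} :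
      Set (V ⊕ Σ x : V, Fin (c x + 1))).ncard = 3 := by
    rw [Set.ncard_insert_of_notMem (by simp), Set.ncard_pair]
    intro hh
    obtain ⟨-, hv⟩ := sigma_mk_eq_iff.mp (inr.inj hh)
    simp [Fin.last] at hv
    omega
  calc 3 = _ := h3.symm
    _ ≤ _ := Set.ncard_le_ncard hsub (Set.toFinite _)

variable [Finite V] in
lemma dg_inl_nonisolated' {v : V} (hc1 : 1 ≤ c v) (h : ∃ u, G.Adj v u) :
    dg G c (inl v) ≠ 2 := by
  obtain ⟨u, hu⟩ := h
  have := dg_inl_nonisolated hc1 hu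
  omega

end CycleAugAux

namespace CycleAugAux

open Sum

variable {V : Type*} [Finite V] {G : SimpleGraph V} {c : V → ℕ}

/-- Relation: adjacent and both of degree 2. -/
def R2 (G : SimpleGraph V) (c : V → ℕ) (a b : V ⊕ Σ v : V, Fin (c v + 1)) : Prop :=
  (cycleAug G c).Adj a b ∧ dg G c a = 2 ∧ dg G c b = 2

/-- "Component" of x along degree-2 vertices. -/
def CC (G : SimpleGraph V) (c : V → ℕ) (x : V ⊕ Σ v : V, Fin (c v + 1)) :
    Set (V ⊕ Σ v : V, Fin (c v + 1)) :=
  {y | Relation.ReflTransGen (R2 G c) x y}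

lemma R2_symm : Symmetric (R2 G c) := fun _ _ ⟨h1, h2, h3⟩ => ⟨h1.symm, h3, h2⟩

lemma mem_CC_self (x : V ⊕ Σ v : V, Fin (c v + 1)) : x ∈ CC G c x := .refl

lemma mem_CC_symm {x y : V ⊕ Σ v : V, Fin (c v + 1)} (h : y ∈ CC G c x) :
    x ∈ CC G c y :=
  (@Relation.ReflTransGen.stdSymm _ (R2 G c) ⟨R2_symm⟩).symm _ _ h

lemma CC_eq_of_mem {x y : V ⊕ Σ v : V, Fin (c v + 1)} (h : y ∈ CC G c x) :
    CC G c y = CC G c x := by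
  ext z
  exact ⟨fun hz => .trans h hz, fun hz => .trans (mem_CC_symm h) hz⟩

/-- The gadget set of `v`. -/
def Sv (c : V → ℕ) (v : V) : Set (V ⊕ Σ x : V, Fin (c x + 1)) :=
  Set.range fun i : Fin (c v + 1) => inr ⟨v, i⟩

lemma CC_singleton {x : V ⊕ Σ v : V, Fin (c v + 1)} (hdg : dg G c x ≠ 2) :
    CC G c x = {x} := by
  apply Set.eq_of_subset_of_subset
  · intro y hy
    induction hy with
    | refl => rfl
    | tail _ hR ih =>
      obtain rfl : _ = x := ih
      exact absurd hR.2.1 hdg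
  · rintro y rfl
    exact mem_CC_self _

lemma chain0 (hc : ∀ v, 1 ≤ c v) (v : V) (i : Fin (c v + 1)) :
    Relation.ReflTransGen (R2 G c) (inr ⟨v, 0⟩) (inr ⟨v, i⟩) := by
  obtain ⟨n, hn⟩ := i
  induction n with
  | zero => exact .refl
  | succ m ih =>
    refine .tail (ih (by omega)) ?_
    refine ⟨adj_inr_inr.mpr ⟨rfl, Or.inl rfl⟩, dg_inr (hc v) _, dg_inr (hc v) _⟩

lemma chain_any (hc : ∀ v, 1 ≤ c v) (v : V) (i j : Fin (c v + 1)) :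
    Relation.ReflTransGen (R2 G c) (inr ⟨v, i⟩) (inr ⟨v, j⟩) :=
  .trans ((@Relation.ReflTransGen.stdSymm _ (R2 G c) ⟨R2_symm⟩).symm _ _ (chain0 hc v i)) (chain0 hc v j)

lemma CC_isolated (hc : ∀ v, 1 ≤ c v) {v : V} (hiso : ∀ u, ¬ G.Adj v u) :
    CC G c (inl v) = {inl v} ∪ Sv c v := by
  apply Set.eq_of_subset_of_subset
  · intro y hy
    induction hy with
    | refl => exact Or.inl rfl
    | tail _ hR ih =>
      rename_i a b _
      rcases ih with rfl | ⟨i, rfl⟩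
      · cases b with
        | inl u => exact absurd (adj_inl_inl.mp hR.1) (hiso u)
        | inr q =>
          obtain ⟨w, j⟩ := q
          obtain ⟨rfl, -⟩ := adj_inl_inr.mp hR.1
          exact Or.inr ⟨j, rfl⟩
      · cases b with
        | inl u =>
          obtain ⟨rfl, -⟩ := adj_inl_inr.mp hR.1.symm
          exact Or.inl rfl
        | inr q =>
          obtain ⟨w, j⟩ := q
          obtain ⟨rfl, -⟩ := adj_inr_inr.mp hR.1
          exact Or.inr ⟨j, rfl⟩
  · rintro y (rfl | ⟨i, rfl⟩)
    · exact mem_CC_self _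
    · refine .trans (.single ?_) (chain0 hc v i)
      exact ⟨adj_inl_inr.mpr ⟨rfl, Or.inl rfl⟩,
        dg_inl_isolated (hc v) hiso, dg_inr (hc v) _⟩

lemma CC_nonisolated (hc : ∀ v, 1 ≤ c v) {v : V} (hno : ∃ u, G.Adj v u)
    (i : Fin (c v + 1)) :
    CC G c (inr ⟨v, i⟩) = Sv c v := by
  apply Set.eq_of_subset_of_subset
  · intro y hy
    induction hy with
    | refl => exact ⟨i, rfl⟩
    | tail _ hR ih =>
      rename_i a b _
      obtain ⟨l, rfl⟩ := ih
      cases b with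
      | inl u =>
        obtain ⟨heq, -⟩ := adj_inl_inr.mp hR.1.symm
        subst heq
        exact absurd hR.2.2 (dg_inl_nonisolated' (hc _) hno)
      | inr q =>
        obtain ⟨w, j⟩ := q
        obtain ⟨rfl, -⟩ := adj_inr_inr.mp hR.1
        exact ⟨j, rfl⟩
  · rintro y ⟨j, rfl⟩
    exact chain_any hc v i j

lemma inl_not_mem_Sv {v w : V} : inl w ∉ Sv c v := by
  rintro ⟨i, h⟩
  exact absurd h (by simp)

lemma ncard_Sv (v : V) : (Sv c v).ncard = c v + 1 := by
  rw [Sv, ← Nat.card_coe_set_eq, Nat.card_range_of_injective, Nat.card_eq_fintype_card,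
    Fintype.card_fin]
  intro i j hij
  obtain ⟨-, h2⟩ := sigma_mk_eq_iff.mp (inr.inj hij)
  exact Fin.ext h2

lemma ncard_CC_isolated (hc : ∀ v, 1 ≤ c v) {v : V} (hiso : ∀ u, ¬ G.Adj v u) :
    (CC G c (inl v)).ncard = c v + 2 := by
  rw [CC_isolated hc hiso, Set.singleton_union,
    Set.ncard_insert_of_notMem inl_not_mem_Sv (Set.toFinite _), ncard_Sv]

lemma ncard_CC_nonisolated (hc : ∀ v, 1 ≤ c v) {v : V} (hno : ∃ u, G.Adj v u)
    (i : Fin (c v + 1)) :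
    (CC G c (inr ⟨v, i⟩)).ncard = c v + 1 := by
  rw [CC_nonisolated hc hno, ncard_Sv]

/-- In any CC-set there is at most one `inl`. -/
lemma inl_mem_CC_unique (hc : ∀ v, 1 ≤ c v)
    {x : V ⊕ Σ v : V, Fin (c v + 1)} {w w' : V}
    (h : inl w ∈ CC G c x) (h' : inl w' ∈ CC G c x) : w = w' := by
  classical
  cases x with
  | inl v =>
    by_cases hiso : ∀ u, ¬ G.Adj v u
    · rw [CC_isolated hc hiso] at h h'
      rcases h with h | h
      · rcases h' with h' | h'
        · rw [Set.mem_singleton_iff] at h h'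
          rw [inl.inj h, inl.inj h']
        · exact absurd h' inl_not_mem_Sv
      · exact absurd h inl_not_mem_Sv
    · push_neg at hiso
      have hs := CC_singleton (G := G) (c := c) (x := inl v)
        (dg_inl_nonisolated' (hc v) (by simpa using hiso))
      rw [hs] at h h'
      rw [Set.mem_singleton_iff] at h h'
      rw [inl.inj h, inl.inj h']
  | inr q =>
    obtain ⟨v, i⟩ := q
    by_cases hiso : ∀ u, ¬ G.Adj v u
    · have hmem : inr ⟨v, i⟩ ∈ CC G c (inl v) := by
        rw [CC_isolated hc hiso]; exact Or.inr ⟨i, rfl⟩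
      rw [CC_eq_of_mem hmem, CC_isolated hc hiso] at h h'
      rcases h with h | h
      · rcases h' with h' | h'
        · rw [Set.mem_singleton_iff] at h h'
          rw [inl.inj h, inl.inj h']
        · exact absurd h' inl_not_mem_Sv
      · exact absurd h inl_not_mem_Sv
    · push_neg at hiso
      rw [CC_nonisolated hc (by simpa using hiso)] at h h'
      exact absurd h inl_not_mem_Sv

end CycleAugAux

namespace CycleAugAux

open Sum

variable {V W : Type*} [Finite V] [Finite W]
  {G : SimpleGraph V} {G' : SimpleGraph W} {c : V → ℕ} {c' : W → ℕ}

lemma dg_map (f : cycleAug G c ≃g cycleAug G' c') (x : V ⊕ Σ v : V, Fin (c v + 1)) :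
    dg G' c' (f x) = dg G c x := by
  rw [dg, dg, ← Nat.card_coe_set_eq, ← Nat.card_coe_set_eq]
  exact Nat.card_congr (f.mapNeighborSet x).symm

lemma R2_map (f : cycleAug G c ≃g cycleAug G' c') {a b : V ⊕ Σ v : V, Fin (c v + 1)} :
    R2 G' c' (f a) (f b) ↔ R2 G c a b := by
  unfold R2
  rw [f.map_adj_iff, dg_map f, dg_map f]

lemma mem_CC_map (f : cycleAug G c ≃g cycleAug G' c')
    {x y : V ⊕ Σ v : V, Fin (c v + 1)} (h : y ∈ CC G c x) :
    f y ∈ CC G' c' (f x) := by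
  induction h with
  | refl => exact mem_CC_self _
  | tail _ hR ih => exact .tail ih ((R2_map f).mpr hR)

lemma mem_CC_map_iff (f : cycleAug G c ≃g cycleAug G' c')
    {x y : V ⊕ Σ v : V, Fin (c v + 1)} :
    f y ∈ CC G' c' (f x) ↔ y ∈ CC G c x := by
  refine ⟨fun h => ?_, mem_CC_map f⟩
  have h2 := mem_CC_map f.symm h
  simpa using h2

lemma CC_map (f : cycleAug G c ≃g cycleAug G' c') (x : V ⊕ Σ v : V, Fin (c v + 1)) :
    CC G' c' (f x) = f '' CC G c x := by
  ext y
  constructor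
  · intro hy
    refine ⟨f.symm y, ?_, by simp⟩
    have : f (f.symm y) ∈ CC G' c' (f x) := by simpa using hy
    exact (mem_CC_map_iff f).mp this
  · rintro ⟨z, hz, rfl⟩
    exact mem_CC_map f hz

lemma ncard_CC_map (f : cycleAug G c ≃g cycleAug G' c') (x : V ⊕ Σ v : V, Fin (c v + 1)) :
    (CC G' c' (f x)).ncard = (CC G c x).ncard := by
  rw [CC_map f]
  exact Set.ncard_image_of_injective _ f.injective

/-- every element of an isolated vertex's cycle-component has its neighbours inside it -/
lemma isolated_closed {v : V} (hiso : ∀ u, ¬ G.Adj v u)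
    {a b : V ⊕ Σ x : V, Fin (c x + 1)}
    (ha : a ∈ ({inl v} : Set _) ∪ Sv c v) (hadj : (cycleAug G c).Adj a b) :
    b ∈ ({inl v} : Set _) ∪ Sv c v := by
  rcases ha with ha | ⟨i, rfl⟩
  · rw [Set.mem_singleton_iff] at ha
    subst ha
    cases b with
    | inl u => exact absurd (adj_inl_inl.mp hadj) (hiso u)
    | inr q =>
      obtain ⟨w, j⟩ := q
      obtain ⟨rfl, -⟩ := adj_inl_inr.mp hadj
      exact Or.inr ⟨j, rfl⟩
  · cases b with
    | inl u =>
      obtain ⟨heq, -⟩ := adj_inl_inr.mp hadj.symm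
      subst heq
      exact Or.inl rfl
    | inr q =>
      obtain ⟨w, j⟩ := q
      obtain ⟨rfl, -⟩ := adj_inr_inr.mp hadj
      exact Or.inr ⟨j, rfl⟩

lemma dg_of_mem_isolated (hc : ∀ v, 1 ≤ c v) {v : V} (hiso : ∀ u, ¬ G.Adj v u)
    {b : V ⊕ Σ x : V, Fin (c x + 1)} (hb : b ∈ ({inl v} : Set _) ∪ Sv c v) :
    dg G c b = 2 := by
  rcases hb with hb | ⟨i, rfl⟩
  · rw [Set.mem_singleton_iff] at hb
    subst hb
    exact dg_inl_isolated (hc v) hiso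
  · exact dg_inr (hc v) i

lemma exu (hc : ∀ v, 1 ≤ c v) (hc' : ∀ w, 1 ≤ c' w)
    (f : cycleAug G c ≃g cycleAug G' c') (v : V) :
    ∃! w : W, inl w ∈ CC G' c' (f (inl v)) := by
  classical
  by_cases hiso : ∀ u, ¬ G.Adj v u
  · cases hfv : f (inl v) with
    | inl w =>
      exact ⟨w, mem_CC_self _, fun w' hw' => inl_mem_CC_unique hc' hw' (mem_CC_self _)⟩
    | inr q =>
      obtain ⟨w, i⟩ := q
      by_cases hiso' : ∀ u, ¬ G'.Adj w u
      · have hmem : inl w ∈ CC G' c' (inr ⟨w, i⟩) :=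
          mem_CC_symm (by rw [CC_isolated hc' hiso']; exact Or.inr ⟨i, rfl⟩)
        exact ⟨w, hmem, fun w' hw' => inl_mem_CC_unique hc' hw' hmem⟩
      · exfalso
        push_neg at hiso'
        -- the preimage of `inl w` is adjacent to the cycle of `v` but has degree ≠ 2
        have hx : inr ⟨w, (0 : Fin (c' w + 1))⟩ ∈ CC G' c' (f (inl v)) := by
          rw [hfv, CC_nonisolated hc' (by simpa using hiso')]
          exact ⟨0, rfl⟩
        have hx2 : f.symm (inr ⟨w, (0 : Fin (c' w + 1))⟩) ∈ CC G c (inl v) := by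
          have := mem_CC_map f.symm hx
          simpa using this
        rw [CC_isolated hc hiso] at hx2
        have hadj : (cycleAug G c).Adj (f.symm (inr ⟨w, (0 : Fin (c' w + 1))⟩))
            (f.symm (inl w)) := by
          rw [f.symm.map_adj_iff, adj_comm, adj_inl_inr]
          exact ⟨rfl, Or.inl rfl⟩
        have hcl := isolated_closed hiso hx2 hadj
        have hdg2 := dg_of_mem_isolated hc hiso hcl
        rw [dg_map f.symm] at hdg2
        exact dg_inl_nonisolated' (hc' w) (by simpa using hiso') hdg2
  · push_neg at hiso
    have hdgne : dg G' c' (f (inl v)) ≠ 2 := by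
      rw [dg_map f]
      exact dg_inl_nonisolated' (hc v) (by simpa using hiso)
    cases hfv : f (inl v) with
    | inl w =>
      exact ⟨w, mem_CC_self _, fun w' hw' => inl_mem_CC_unique hc' hw' (mem_CC_self _)⟩
    | inr q =>
      obtain ⟨w, i⟩ := q
      rw [hfv] at hdgne
      exact absurd (dg_inr (hc' w) i) hdgne

/-- The vertex map recovered from an isomorphism of the augmented graphs. -/
noncomputable def Phi (hc : ∀ v, 1 ≤ c v) (hc' : ∀ w, 1 ≤ c' w)
    (f : cycleAug G c ≃g cycleAug G' c') (v : V) : W :=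
  (exu hc hc' f v).exists.choose

lemma Phi_spec (hc : ∀ v, 1 ≤ c v) (hc' : ∀ w, 1 ≤ c' w)
    (f : cycleAug G c ≃g cycleAug G' c') (v : V) :
    inl (Phi hc hc' f v) ∈ CC G' c' (f (inl v)) :=
  (exu hc hc' f v).exists.choose_spec

lemma Phi_eq (hc : ∀ v, 1 ≤ c v) (hc' : ∀ w, 1 ≤ c' w)
    (f : cycleAug G c ≃g cycleAug G' c') {v : V} {w : W}
    (h : inl w ∈ CC G' c' (f (inl v))) : Phi hc hc' f v = w :=
  inl_mem_CC_unique hc' (Phi_spec hc hc' f v) h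

lemma Phi_symm_Phi (hc : ∀ v, 1 ≤ c v) (hc' : ∀ w, 1 ≤ c' w)
    (f : cycleAug G c ≃g cycleAug G' c') (v : V) :
    Phi hc' hc f.symm (Phi hc hc' f v) = v := by
  apply Phi_eq
  have h1 := Phi_spec hc hc' f v
  have h2 := mem_CC_symm h1
  have h3 := mem_CC_map f.symm h2
  simpa using h3

end CycleAugAux

namespace CycleAugAux

open Sum

variable {V W : Type*} [Finite V] [Finite W]
  {G : SimpleGraph V} {G' : SimpleGraph W} {c : V → ℕ} {c' : W → ℕ}

lemma Phi_nonisolated (hc : ∀ v, 1 ≤ c v) (hc' : ∀ w, 1 ≤ c' w)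
    (f : cycleAug G c ≃g cycleAug G' c') {v : V} (hno : ∃ u, G.Adj v u) :
    f (inl v) = inl (Phi hc hc' f v) ∧ (∃ u, G'.Adj (Phi hc hc' f v) u) := by
  classical
  have hdgne : dg G' c' (f (inl v)) ≠ 2 := by
    rw [dg_map f]
    exact dg_inl_nonisolated' (hc v) hno
  cases hfv : f (inl v) with
  | inl w =>
    have hw : Phi hc hc' f v = w := by
      apply Phi_eq
      rw [hfv]
      exact mem_CC_self _
    rw [hw]
    refine ⟨rfl, ?_⟩
    by_contra hiso'
    push_neg at hiso'
    have h2 : dg G' c' (inl w) = 2 := dg_inl_isolated (hc' w) (by simpa using hiso')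
    rw [hfv] at hdgne
    exact hdgne h2
  | inr q =>
    obtain ⟨w, i⟩ := q
    rw [hfv] at hdgne
    exact absurd (dg_inr (hc' w) i) hdgne

lemma Phi_isolated (hc : ∀ v, 1 ≤ c v) (hc' : ∀ w, 1 ≤ c' w)
    (f : cycleAug G c ≃g cycleAug G' c') {v : V} (hiso : ∀ u, ¬ G.Adj v u) :
    (∀ u, ¬ G'.Adj (Phi hc hc' f v) u) ∧ c' (Phi hc hc' f v) = c v := by
  classical
  set w := Phi hc hc' f v with hw
  have hmem : inl w ∈ CC G' c' (f (inl v)) := Phi_spec hc hc' f v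
  have hsymmem : f.symm (inl w) ∈ CC G c (inl v) := by
    have := mem_CC_map f.symm hmem
    simpa using this
  have hwiso : ∀ u, ¬ G'.Adj w u := by
    intro u hu
    have hdgw : dg G' c' (inl w) ≠ 2 := dg_inl_nonisolated' (hc' w) ⟨u, hu⟩
    rw [CC_isolated hc hiso] at hsymmem
    have h2 : dg G c (f.symm (inl w)) = 2 := dg_of_mem_isolated hc hiso hsymmem
    rw [dg_map f.symm] at h2
    exact hdgw h2
  refine ⟨hwiso, ?_⟩
  have hcc : CC G' c' (inl w) = CC G' c' (f (inl v)) := CC_eq_of_mem hmem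
  have h1 : (CC G' c' (inl w)).ncard = c' w + 2 := ncard_CC_isolated hc' hwiso
  have h2 : (CC G' c' (f (inl v))).ncard = c v + 2 := by
    rw [ncard_CC_map f]
    exact ncard_CC_isolated hc hiso
  rw [hcc, h2] at h1
  omega

lemma Phi_col_nonisolated (hc : ∀ v, 1 ≤ c v) (hc' : ∀ w, 1 ≤ c' w)
    (f : cycleAug G c ≃g cycleAug G' c') {v : V} (hno : ∃ u, G.Adj v u) :
    c' (Phi hc hc' f v) = c v := by
  classical
  obtain ⟨hfv, hno'⟩ := Phi_nonisolated hc hc' f hno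
  set w := Phi hc hc' f v with hw
  have hadj : (cycleAug G' c').Adj (inl w) (f (inr ⟨v, (0 : Fin (c v + 1))⟩)) := by
    rw [← hfv, f.map_adj_iff]
    exact adj_inl_inr.mpr ⟨rfl, Or.inl rfl⟩
  have hdg2 : dg G' c' (f (inr ⟨v, (0 : Fin (c v + 1))⟩)) = 2 := by
    rw [dg_map f]
    exact dg_inr (hc v) _
  cases hfx : f (inr ⟨v, (0 : Fin (c v + 1))⟩) with
  | inl u =>
    rw [hfx] at hadj hdg2
    have : G'.Adj w u := adj_inl_inl.mp hadj
    exact absurd hdg2 (dg_inl_nonisolated' (hc' u) ⟨w, this.symm⟩)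
  | inr q =>
    obtain ⟨w', j⟩ := q
    rw [hfx] at hadj
    obtain ⟨heq, -⟩ := adj_inl_inr.mp hadj
    subst heq
    have h1 : (CC G' c' (f (inr ⟨v, (0 : Fin (c v + 1))⟩))).ncard = c v + 1 := by
      rw [ncard_CC_map f]
      exact ncard_CC_nonisolated hc hno _
    rw [hfx, ncard_CC_nonisolated hc' hno' j] at h1
    omega

end CycleAugAux

namespace CycleAugAux

open Sum

section Forward

variable {V W : Type*} {G : SimpleGraph V} {G' : SimpleGraph W} {c : V → ℕ} {c' : W → ℕ}

/-- The equivalence of vertex types induced by a coloured isomorphism. -/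
def fwdEquiv (φ : V ≃ W) (hcol : ∀ v, c' (φ v) = c v) :
    (V ⊕ Σ v : V, Fin (c v + 1)) ≃ (W ⊕ Σ w : W, Fin (c' w + 1)) where
  toFun a :=
    match a with
    | inl v => inl (φ v)
    | inr ⟨v, i⟩ => inr ⟨φ v, ⟨i.val, by rw [hcol v]; exact i.isLt⟩⟩
  invFun b :=
    match b with
    | inl w => inl (φ.symm w)
    | inr ⟨w, j⟩ => inr ⟨φ.symm w, ⟨j.val, by
        have h1 := j.isLt
        have h2 := hcol (φ.symm w)
        rw [φ.apply_symm_apply] at h2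
        omega⟩⟩
  left_inv a := by
    rcases a with v | ⟨v, i⟩
    · simp
    · exact congrArg inr (sigma_mk_eq_iff.mpr ⟨by simp, rfl⟩)
  right_inv b := by
    rcases b with w | ⟨w, j⟩
    · simp
    · exact congrArg inr (sigma_mk_eq_iff.mpr ⟨by simp, rfl⟩)

/-- A coloured isomorphism induces an isomorphism of the augmented graphs. -/
def fwdIso (φ : V ≃ W) (hadj : ∀ u v, G.Adj u v ↔ G'.Adj (φ u) (φ v))
    (hcol : ∀ v, c' (φ v) = c v) : cycleAug G c ≃g cycleAug G' c' where
  toEquiv := fwdEquiv φ hcol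
  map_rel_iff' := by
    rintro (u | ⟨u, i⟩) (v | ⟨v, j⟩)
    · show (cycleAug G' c').Adj (inl (φ u)) (inl (φ v)) ↔ _
      rw [adj_inl_inl, adj_inl_inl]
      exact (hadj u v).symm
    · show (cycleAug G' c').Adj (inl (φ u)) (inr ⟨φ v, _⟩) ↔ _
      rw [adj_inl_inr, adj_inl_inr]
      constructor
      · rintro ⟨h1, h2⟩
        simp only [Fin.val_mk] at h2
        exact ⟨φ.injective h1, by rwa [hcol v] at h2⟩
      · rintro ⟨h1, h2⟩
        refine ⟨congrArg φ h1, ?_⟩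
        simp only [Fin.val_mk]
        rwa [hcol v]
    · show (cycleAug G' c').Adj (inr ⟨φ u, _⟩) (inl (φ v)) ↔ _
      rw [adj_comm, adj_comm (G := cycleAug G c), adj_inl_inr, adj_inl_inr]
      constructor
      · rintro ⟨h1, h2⟩
        simp only [Fin.val_mk] at h2
        exact ⟨φ.injective h1, by rwa [hcol u] at h2⟩
      · rintro ⟨h1, h2⟩
        refine ⟨congrArg φ h1, ?_⟩
        simp only [Fin.val_mk]
        rwa [hcol u]
    · show (cycleAug G' c').Adj (inr ⟨φ u, _⟩) (inr ⟨φ v, _⟩) ↔ _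
      rw [adj_inr_inr, adj_inr_inr]
      constructor
      · rintro ⟨h1, h2⟩
        exact ⟨φ.injective h1, h2⟩
      · rintro ⟨h1, h2⟩
        exact ⟨congrArg φ h1, h2⟩

end Forward

end CycleAugAux

open CycleAugAux Sum

/-- Coloured graphs `(G, c)` and `(G', c')` (with colours in `{1, …, k}`) are
isomorphic as coloured graphs if and only if the augmented graphs `H = cycleAug G c`
and `H' = cycleAug G' c'` are isomorphic as uncoloured graphs. -/
theorem colouredIso_iff_cycleAug_iso {V W : Type*} [Fintype V] [Fintype W]
    (G : SimpleGraph V) (G' : SimpleGraph W) (k : ℕ) (c : V → ℕ) (c' : W → ℕ)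
    (hc : ∀ v, 1 ≤ c v ∧ c v ≤ k) (hc' : ∀ w, 1 ≤ c' w ∧ c' w ≤ k) :
    (∃ φ : V ≃ W, (∀ u v, G.Adj u v ↔ G'.Adj (φ u) (φ v)) ∧ ∀ v, c' (φ v) = c v) ↔
      Nonempty (cycleAug G c ≃g cycleAug G' c') := by
  classical
  have hc1 : ∀ v, 1 ≤ c v := fun v => (hc v).1
  have hc1' : ∀ w, 1 ≤ c' w := fun w => (hc' w).1
  constructor
  · rintro ⟨φ, hadj, hcol⟩
    exact ⟨fwdIso φ hadj hcol⟩
  · rintro ⟨f⟩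
    have hss : f.symm.symm = f := rfl
    refine ⟨⟨Phi hc1 hc1' f, Phi hc1' hc1 f.symm, Phi_symm_Phi hc1 hc1' f, ?_⟩, ?_, ?_⟩
    · intro w
      have h := Phi_symm_Phi hc1' hc1 f.symm w
      rwa [hss] at h
    · intro u v
      by_cases hu : ∀ z, ¬ G.Adj u z
      · refine iff_of_false (hu v) ?_
        have hui := (Phi_isolated hc1 hc1' f hu).1
        exact hui _
      · by_cases hv : ∀ z, ¬ G.Adj v z
        · refine iff_of_false (fun h => hv u h.symm) ?_
          have hvi := (Phi_isolated hc1 hc1' f hv).1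
          exact fun h => hvi _ h.symm
        · push_neg at hu hv
          obtain ⟨hfu, -⟩ := Phi_nonisolated hc1 hc1' f hu
          obtain ⟨hfv, -⟩ := Phi_nonisolated hc1 hc1' f hv
          calc G.Adj u v
              ↔ (cycleAug G c).Adj (inl u) (inl v) := adj_inl_inl.symm
            _ ↔ (cycleAug G' c').Adj (f (inl u)) (f (inl v)) := f.map_adj_iff.symm
            _ ↔ G'.Adj (Phi hc1 hc1' f u) (Phi hc1 hc1' f v) := by
                rw [hfu, hfv, adj_inl_inl]
    · intro v
      by_cases hv : ∀ z, ¬ G.Adj v z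
      · exact (Phi_isolated hc1 hc1' f hv).2
      · push_neg at hv
        exact Phi_col_nonisolated hc1 hc1' f hv
end

section
/- Let G be a finite simple graph, d ≥ 0, and let S := {v ∈ V(G) : deg_G(v) > d}. If R is a d-deletion set of G of minimum size (i.e. no d-deletion set of G has strictly smaller cardinality), then R ⊆ S ∪ N_G(S). -/
open SimpleGraph Set

variable {V : Type*}

/-- The degree of a vertex: the number of its neighbours. -/
noncomputable def gdeg (G : SimpleGraph V) (v : V) : ℕ := (G.neighborSet v).ncard

/-- The degree of `v` inside the vertex set `A`, i.e. its degree in the induced subgraph. -/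
noncomputable def degreeIn (G : SimpleGraph V) (A : Set V) (v : V) : ℕ :=
  (A ∩ G.neighborSet v).ncard

/-- `R` is a `d`-deletion set for `G`: the induced subgraph of `G` on the complement
of `R` has maximum degree at most `d`. -/
def IsDelSet (G : SimpleGraph V) (d : ℕ) (R : Set V) : Prop :=
  ∀ v ∈ Rᶜ, degreeIn G Rᶜ v ≤ d

/-- The neighbourhood `N_G(S)` of a set of vertices `S`. -/
def nbhd (G : SimpleGraph V) (S : Set V) : Set V := {v | ∃ u ∈ S, G.Adj u v}

/-- A minimum-size `d`-deletion set is contained in `S ∪ N_G(S)`, where `S` is the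
set of vertices of degree greater than `d`. -/
theorem minimum_delSet_subset {V : Type*} [Fintype V] (G : SimpleGraph V) (d : ℕ)
    (R : Set V) (hR : IsDelSet G d R)
    (hmin : ∀ R' : Set V, IsDelSet G d R' → R.ncard ≤ R'.ncard) :
    R ⊆ {v | d < gdeg G v} ∪ nbhd G {v | d < gdeg G v} := by
  intro v hv
  by_contra hvs
  rw [Set.mem_union] at hvs
  push_neg at hvs
  obtain ⟨hS, hN⟩ := hvs
  simp only [Set.mem_setOf_eq, not_lt] at hS
  have hdel : IsDelSet G d (R \ {v}) := by
    intro u hu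
    by_cases huv : u = v
    · subst huv
      exact le_trans (Set.ncard_le_ncard Set.inter_subset_right (Set.toFinite _)) hS
    · have huR : u ∈ Rᶜ := by
        rw [Set.mem_compl_iff, Set.mem_diff, not_and_or, not_not] at hu
        rcases hu with h | h
        · exact h
        · exact absurd h huv
      by_cases hadj : G.Adj v u
      · have hud : gdeg G u ≤ d := by
          by_contra h
          exact hN ⟨u, not_le.mp h, hadj.symm⟩
        exact le_trans (Set.ncard_le_ncard Set.inter_subset_right (Set.toFinite _)) hud
      · have hsub : (R \ {v})ᶜ ∩ G.neighborSet u ⊆ Rᶜ ∩ G.neighborSet u := by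
          rintro w ⟨hw, hwn⟩
        
          refine ⟨fun hwR => ?_, hwn⟩
          rw [Set.mem_compl_iff, Set.mem_diff, not_and_or, not_not] at hw
          rcases hw with h | h
          · exact h hwR
          · rw [Set.mem_singleton_iff] at h
            subst h
            exact hadj hwn.symm
        exact le_trans (Set.ncard_le_ncard hsub (Set.toFinite _)) (hR u huR)
  have hlt : (R \ {v}).ncard < R.ncard :=
    Set.ncard_diff_singleton_lt_of_mem hv (Set.toFinite _)
  exact absurd (hmin _ hdel) (not_le.mpr hlt)
end

section
/- Let G be a finite simple graph with maximum degree at most k+d, let S := {v ∈ V(G) : deg_G(v) > d} and U := S ∪ N_G(S). If R is a minimum-size d-deletion set of G with |R| = k', then U ⊆ R ∪ N_G(R) ∪ N_G(N_G(R)), and consequently |U| ≤ k' + k'(k+d) + k'(k+d)^2. -/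
open SimpleGraph Set

variable {V : Type*}

lemma nbhd_mono (G : SimpleGraph V) {A B : Set V} (h : A ⊆ B) : nbhd G A ⊆ nbhd G B := by
  rintro v ⟨u, hu, hadj⟩; exact ⟨u, h hu, hadj⟩

lemma nbhd_union (G : SimpleGraph V) (A B : Set V) :
    nbhd G (A ∪ B) = nbhd G A ∪ nbhd G B := by
  ext v
  constructor
  · rintro ⟨u, hu | hu, hadj⟩
    · exact Or.inl ⟨u, hu, hadj⟩
    · exact Or.inr ⟨u, hu, hadj⟩
  · rintro (⟨u, hu, hadj⟩ | ⟨u, hu, hadj⟩)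
    · exact ⟨u, Or.inl hu, hadj⟩
    · exact ⟨u, Or.inr hu, hadj⟩

lemma nbhd_card [Fintype V] (G : SimpleGraph V) (m : ℕ) (hΔ : ∀ v, gdeg G v ≤ m)
    (A : Set V) : (nbhd G A).ncard ≤ A.ncard * m := by
  classical
  have hsub : nbhd G A ⊆
      ↑(A.toFinset.biUnion (fun u => (G.neighborSet u).toFinset)) := by
    rintro v ⟨u, hu, hadj⟩
    simp only [Finset.coe_biUnion, Set.mem_iUnion, Finset.mem_coe, Set.mem_toFinset]
    exact ⟨u, hu, hadj⟩
  calc (nbhd G A).ncard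
      ≤ (↑(A.toFinset.biUnion (fun u => (G.neighborSet u).toFinset)) : Set V).ncard :=
        Set.ncard_le_ncard hsub (Set.toFinite _)
    _ = (A.toFinset.biUnion (fun u => (G.neighborSet u).toFinset)).card :=
        Set.ncard_coe_finset _
    _ ≤ ∑ u ∈ A.toFinset, (G.neighborSet u).toFinset.card := Finset.card_biUnion_le
    _ ≤ ∑ _u ∈ A.toFinset, m := by
        apply Finset.sum_le_sum
        intro u _
        have := hΔ u
        rwa [gdeg, Set.ncard_eq_toFinset_card'] at this
    _ = A.toFinset.card * m := by rw [Finset.sum_const, smul_eq_mul]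
    _ = A.ncard * m := by rw [Set.ncard_eq_toFinset_card']

/-- If `G` has maximum degree at most `k + d`, `S` is the set of vertices of degree
greater than `d` and `U = S ∪ N_G(S)`, then for any minimum-size `d`-deletion set `R`
with `|R| = k'` we have `U ⊆ R ∪ N_G(R) ∪ N_G(N_G(R))`, and hence
`|U| ≤ k' + k'(k+d) + k'(k+d)²`. -/
theorem kernel_bound {V : Type*} [Fintype V] (G : SimpleGraph V) (k d k' : ℕ)
    (hΔ : ∀ v, gdeg G v ≤ k + d)
    (R : Set V) (hR : IsDelSet G d R)
    (hmin : ∀ R' : Set V, IsDelSet G d R' → R.ncard ≤ R'.ncard)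
    (hcard : R.ncard = k')
    (S U : Set V) (hS : S = {v | d < gdeg G v}) (hU : U = S ∪ nbhd G S) :
    U ⊆ R ∪ nbhd G R ∪ nbhd G (nbhd G R) ∧
      U.ncard ≤ k' + k' * (k + d) + k' * (k + d) ^ 2 := by
  classical
  have hSsub : S ⊆ R ∪ nbhd G R := by
    intro v hv
    by_cases hvR : v ∈ R
    · exact Or.inl hvR
    · have hdeg : degreeIn G Rᶜ v ≤ d := hR v hvR
      rw [hS] at hv
      simp only [Set.mem_setOf_eq] at hv
      have hne : ¬ (G.neighborSet v ⊆ Rᶜ) := by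
        intro hsub
        have : G.neighborSet v = Rᶜ ∩ G.neighborSet v := by
          rw [Set.inter_eq_self_of_subset_right hsub]
        have h2 : gdeg G v ≤ d := by
          rw [gdeg, this]; exact hdeg
        omega
      obtain ⟨u, hu, huR⟩ := Set.not_subset.mp hne
      simp only [Set.mem_compl_iff, not_not] at huR
      exact Or.inr ⟨u, huR, (G.mem_neighborSet v u).mp hu |>.symm⟩
  have hUsub : U ⊆ R ∪ nbhd G R ∪ nbhd G (nbhd G R) := by
    rw [hU]
    intro v hv
    rcases hv with hv | hv
    · exact Or.inl (hSsub hv)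
    · have : v ∈ nbhd G (R ∪ nbhd G R) := nbhd_mono G hSsub hv
      rw [nbhd_union] at this
      rcases this with h | h
      · exact Or.inl (Or.inr h)
      · exact Or.inr h
  refine ⟨hUsub, ?_⟩
  have h1 : (nbhd G R).ncard ≤ k' * (k + d) := by
    have := nbhd_card G (k + d) hΔ R
    rwa [hcard] at this
  have h2 : (nbhd G (nbhd G R)).ncard ≤ k' * (k + d) ^ 2 := by
    have := nbhd_card G (k + d) hΔ (nbhd G R)
    calc (nbhd G (nbhd G R)).ncard ≤ (nbhd G R).ncard * (k + d) := this
      _ ≤ k' * (k + d) * (k + d) := Nat.mul_le_mul_right _ h1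
      _ = k' * (k + d) ^ 2 := by ring
  calc U.ncard ≤ (R ∪ nbhd G R ∪ nbhd G (nbhd G R)).ncard :=
        Set.ncard_le_ncard hUsub (Set.toFinite _)
    _ ≤ (R ∪ nbhd G R).ncard + (nbhd G (nbhd G R)).ncard := Set.ncard_union_le _ _
    _ ≤ R.ncard + (nbhd G R).ncard + (nbhd G (nbhd G R)).ncard := by
        have := Set.ncard_union_le R (nbhd G R); omega
    _ ≤ k' + k' * (k + d) + k' * (k + d) ^ 2 := by rw [hcard]; omega
end

section
/- Let G be a finite simple graph, k, d > 0 integers, and H := {v ∈ V(G) : deg_G(v) > k+d}. Then: (i) every d-deletion set of G of size at most k contains H, so if G has a d-deletion set of size at most k then |H| ≤ k; and (ii) if |H| ≤ k, then G has a d-deletion set of size at most k if and only if the induced subgraph of G on V(G) ∖ H has a d-deletion set of size at most k − |H|. -/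
open SimpleGraph Set

variable {V : Type*}

/-- Let `H` be the set of vertices of degree greater than `k + d`.  (i) Every
`d`-deletion set of size at most `k` contains `H`, so if such a set exists then
`|H| ≤ k`.  (ii) If `|H| ≤ k`, then `G` has a `d`-deletion set of size at most `k`
iff the induced subgraph of `G` on the complement of `H` has a `d`-deletion set of
size at most `k - |H|`. -/
theorem kernelisation_highDeg {V : Type*} [Fintype V] (G : SimpleGraph V) (k d : ℕ)
    (hk : 0 < k) (hd : 0 < d) (H : Set V) (hH : H = {v | k + d < gdeg G v}) :
    ((∀ R : Set V, IsDelSet G d R → R.ncard ≤ k → H ⊆ R) ∧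
      ((∃ R : Set V, IsDelSet G d R ∧ R.ncard ≤ k) → H.ncard ≤ k)) ∧
    (H.ncard ≤ k →
      ((∃ R : Set V, IsDelSet G d R ∧ R.ncard ≤ k) ↔
        (∃ R' : Set V, R' ⊆ Hᶜ ∧ (∀ v ∈ Hᶜ \ R', degreeIn G (Hᶜ \ R') v ≤ d) ∧
          R'.ncard ≤ k - H.ncard))) := by
  have part1 : ∀ R : Set V, IsDelSet G d R → R.ncard ≤ k → H ⊆ R := by
    intro R hR hRk v hv
    rw [hH] at hv
    have hv' : k + d < gdeg G v := hv
    by_contra hvR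
    have h1 : G.neighborSet v ⊆ (Rᶜ ∩ G.neighborSet v) ∪ R := by
      intro u hu
      by_cases hu' : u ∈ R
      · exact Or.inr hu'
      · exact Or.inl ⟨hu', hu⟩
    have h2 : gdeg G v ≤ degreeIn G Rᶜ v + R.ncard :=
      calc gdeg G v ≤ ((Rᶜ ∩ G.neighborSet v) ∪ R).ncard :=
            Set.ncard_le_ncard h1 (Set.toFinite _)
        _ ≤ degreeIn G Rᶜ v + R.ncard := Set.ncard_union_le _ _
    have h3 := hR v hvR
    omega
  refine ⟨⟨part1, ?_⟩, ?_⟩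
  · rintro ⟨R, hR, hRk⟩
    exact le_trans (Set.ncard_le_ncard (part1 R hR hRk) (Set.toFinite _)) hRk
  · intro hHk
    constructor
    · rintro ⟨R, hR, hRk⟩
      have hHR : H ⊆ R := part1 R hR hRk
      refine ⟨R \ H, fun v hv => hv.2, ?_, ?_⟩
      · have heq : Hᶜ \ (R \ H) = Rᶜ := by
          ext v
          have := @hHR v
          simp only [Set.mem_diff, Set.mem_compl_iff]
          tauto
        rw [heq]
        exact hR
      · rw [Set.ncard_diff hHR (Set.toFinite _)]
        omega
    · rintro ⟨R', hR'H, hR'del, hR'k⟩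
      refine ⟨H ∪ R', ?_, ?_⟩
      · intro v hv
        have heq : (H ∪ R')ᶜ = Hᶜ \ R' := by
          rw [Set.compl_union]; rfl
        rw [heq] at hv ⊢
        exact hR'del v hv
      · calc (H ∪ R').ncard ≤ H.ncard + R'.ncard := Set.ncard_union_le _ _
          _ ≤ k := by omega
end

section
/- A finite simple graph G satisfies ed_d(G) ≤ k if and only if there exists an elimination order to degree d for G in which every chain contains at most k non-maximal vertices (i.e. of d-height at most k). -/
open SimpleGraph Set

variable {V : Type*}

/-- A tree order: a partial order in which the set of predecessors of any
element is linearly ordered. -/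
structure IsTreeOrder (le : V → V → Prop) : Prop where
  refl : ∀ a, le a a
  antisymm : ∀ a b, le a b → le b a → a = b
  trans : ∀ a b c, le a b → le b c → le a c
  downLinear : ∀ a b c, le b a → le c a → le b c ∨ le c b

/-- A chain: a set of pairwise comparable elements. -/
def IsChainOf (le : V → V → Prop) (s : Set V) : Prop :=
  ∀ a ∈ s, ∀ b ∈ s, le a b ∨ le b a

/-- The order has height at most `k`: every chain has at most `k` elements. -/
def HeightLE (le : V → V → Prop) (k : ℕ) : Prop :=
  ∀ s : Set V, IsChainOf le s → s.ncard ≤ k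

/-- `v` is a maximal element of the order `le`. -/
def IsLeMaximal (le : V → V → Prop) (v : V) : Prop := ∀ w, le v w → w = v

/-- The order has `d`-height at most `k`: every chain contains at most `k`
non-maximal elements. -/
def DHeightLE (le : V → V → Prop) (k : ℕ) : Prop :=
  ∀ s : Set V, IsChainOf le s → {v ∈ s | ¬ IsLeMaximal le v}.ncard ≤ k

/-- An elimination order for `G`: a tree order in which the endpoints of each
edge are comparable. -/
def IsElimOrder (G : SimpleGraph V) (le : V → V → Prop) : Prop :=
  IsTreeOrder le ∧ ∀ u v, G.Adj u v → le u v ∨ le v u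

/-- The set `S_v` of neighbours of `v` that are incomparable to `v`. -/
def Sset (G : SimpleGraph V) (le : V → V → Prop) (v : V) : Set V :=
  {u | G.Adj u v ∧ ¬ le u v ∧ ¬ le v u}

/-- An elimination order to degree `d` for `G`. -/
def IsElimOrderToDeg (G : SimpleGraph V) (d : ℕ) (le : V → V → Prop) : Prop :=
  IsTreeOrder le ∧ ∀ v : V, Sset G le v = ∅ ∨
    (IsLeMaximal le v ∧ (Sset G le v).ncard ≤ d ∧
      ∀ u ∈ Sset G le v, {w | le w u ∧ w ≠ u} = {w | le w v ∧ w ≠ v})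

/-- `C` is the vertex set of a connected component of the induced subgraph `G[B]`:
a maximal connected subset of `B`. -/
def IsCompOf (G : SimpleGraph V) (B C : Set V) : Prop :=
  C.Nonempty ∧ C ⊆ B ∧ (G.induce C).Connected ∧
    ∀ C', C ⊆ C' → C' ⊆ B → (G.induce C').Connected → C' = C

/-- `TdLE G A k` says that the tree-depth of the induced subgraph `G[A]` is at
most `k`, following the recursive definition of tree-depth. -/
inductive TdLE (G : SimpleGraph V) : Set V → ℕ → Prop
  | empty (k : ℕ) : TdLE G ∅ k
  | conn (A : Set V) (k : ℕ) (hc : (G.induce A).Connected) (v : V) (hv : v ∈ A)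
      (h : TdLE G (A \ {v}) k) : TdLE G A (k + 1)
  | disconn (A : Set V) (k : ℕ) (hne : A.Nonempty) (hc : ¬ (G.induce A).Connected)
      (h : ∀ C, IsCompOf G A C → TdLE G C k) : TdLE G A k

/-- `EdLE G d A k` says that the elimination distance to degree `d` of the
induced subgraph `G[A]` is at most `k`, following the recursive definition. -/
inductive EdLE (G : SimpleGraph V) (d : ℕ) : Set V → ℕ → Prop
  | base (A : Set V) (k : ℕ) (h : ∀ v ∈ A, degreeIn G A v ≤ d) : EdLE G d A k
  | conn (A : Set V) (k : ℕ) (hd : ¬ ∀ v ∈ A, degreeIn G A v ≤ d)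
      (hc : (G.induce A).Connected) (v : V) (hv : v ∈ A)
      (h : EdLE G d (A \ {v}) k) : EdLE G d A (k + 1)
  | disconn (A : Set V) (k : ℕ) (hd : ¬ ∀ v ∈ A, degreeIn G A v ≤ d)
      (hc : ¬ (G.induce A).Connected)
      (h : ∀ C, IsCompOf G A C → EdLE G d C k) : EdLE G d A k

/-- The `m`-degree torso of `G`: the graph on the vertices of degree greater
than `m`, where two such vertices are adjacent if some path of `G` between them
has all its internal vertices of degree at most `m`. -/
def ATorso (G : SimpleGraph V) (m : ℕ) : SimpleGraph {v : V // m < gdeg G v} where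
  Adj u v := u ≠ v ∧ ∃ p : G.Walk u.1 v.1, p.IsPath ∧
      ∀ w ∈ p.support, w ≠ u.1 → w ≠ v.1 → gdeg G w ≤ m
  symm := by
    refine ⟨?_⟩
    rintro u v ⟨hne, p, hp, hsup⟩
    refine ⟨hne.symm, p.reverse, hp.reverse, fun w hw h1 h2 => ?_⟩
    rw [SimpleGraph.Walk.support_reverse, List.mem_reverse] at hw
    exact hsup w hw h2 h1
  loopless := by refine ⟨?_⟩; rintro u ⟨hne, -⟩; exact hne rfl

section AuxRIn

variable {G : SimpleGraph V} {A B C : Set V} {a b c : V}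

/-- Reachability within a vertex set: a walk whose support stays in `A`. -/
def RIn (G : SimpleGraph V) (A : Set V) (a b : V) : Prop :=
  ∃ p : G.Walk a b, ∀ x ∈ p.support, x ∈ A

lemma RIn.mem_left (h : RIn G A a b) : a ∈ A := by
  obtain ⟨p, hp⟩ := h; exact hp a p.start_mem_support

lemma RIn.mem_right (h : RIn G A a b) : b ∈ A := by
  obtain ⟨p, hp⟩ := h; exact hp b p.end_mem_support

lemma RIn.rfl (ha : a ∈ A) : RIn G A a a :=
  ⟨SimpleGraph.Walk.nil, by simpa using ha⟩

lemma RIn.symm (h : RIn G A a b) : RIn G A b a := by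
  obtain ⟨p, hp⟩ := h
  exact ⟨p.reverse, by simpa [SimpleGraph.Walk.support_reverse] using hp⟩

lemma RIn.trans (h : RIn G A a b) (h' : RIn G A b c) : RIn G A a c := by
  obtain ⟨p, hp⟩ := h; obtain ⟨q, hq⟩ := h'
  refine ⟨p.append q, fun x hx => ?_⟩
  rcases (SimpleGraph.Walk.mem_support_append_iff _ _).1 hx with h | h
  · exact hp x h
  · exact hq x h

lemma RIn.mono (hAB : A ⊆ B) (h : RIn G A a b) : RIn G B a b := by
  obtain ⟨p, hp⟩ := h; exact ⟨p, fun x hx => hAB (hp x hx)⟩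

lemma RIn.of_adj (ha : a ∈ A) (hb : b ∈ A) (hadj : G.Adj a b) : RIn G A a b := by
  refine ⟨SimpleGraph.Walk.cons hadj SimpleGraph.Walk.nil, ?_⟩
  intro x hx; simp at hx; rcases hx with rfl | rfl <;> assumption

lemma reachable_induce_of_walk :
    ∀ {a b : V} (p : G.Walk a b) (hp : ∀ x ∈ p.support, x ∈ C) (ha : a ∈ C) (hb : b ∈ C),
      (G.induce C).Reachable ⟨a, ha⟩ ⟨b, hb⟩ := by
  intro a b p
  induction p with
  | nil => intro _ ha hb; rfl
  | @cons u v w h q ih =>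
      intro hp ha hb
      have hmem : v ∈ C := hp v (by simp)
      refine (SimpleGraph.Adj.reachable ?_).trans (ih (fun x hx => hp x (by simp [hx])) hmem hb)
      exact h

lemma connected_induce_iff_rIn :
    (G.induce C).Connected ↔ C.Nonempty ∧ ∀ a ∈ C, ∀ b ∈ C, RIn G C a b := by
  constructor
  · intro h
    have hne : C.Nonempty := by
      obtain ⟨⟨x, hx⟩⟩ := h.nonempty; exact ⟨x, hx⟩
    refine ⟨hne, fun a ha b hb => ?_⟩
    obtain ⟨p⟩ := h.preconnected ⟨a, ha⟩ ⟨b, hb⟩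
    refine ⟨p.map (SimpleGraph.Embedding.induce C).toHom, fun x hx => ?_⟩
    replace hx : x ∈ (p.map (SimpleGraph.Embedding.induce C).toHom).support := hx
    rw [SimpleGraph.Walk.support_map, List.mem_map] at hx
    obtain ⟨⟨y, hy⟩, -, rfl⟩ := hx
    exact hy
  · rintro ⟨⟨a, ha⟩, h⟩
    have : Nonempty C := ⟨⟨a, ha⟩⟩
    refine SimpleGraph.Connected.mk fun ⟨x, hx⟩ ⟨y, hy⟩ => ?_
    obtain ⟨p, hp⟩ := h x hx y hy
    exact reachable_induce_of_walk p hp hx hy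

/-- The component of `a` in `A`. -/
def CompOf (G : SimpleGraph V) (A : Set V) (a : V) : Set V := {b | RIn G A a b}

lemma isCompOf_compOf (ha : a ∈ A) : IsCompOf G A (CompOf G A a) := by
  classical
  have hsub : CompOf G A a ⊆ A := fun b hb => hb.mem_right
  have hmem : a ∈ CompOf G A a := RIn.rfl ha
  have hR : ∀ b ∈ CompOf G A a, RIn G (CompOf G A a) a b := by
    intro b hb
    obtain ⟨p, hp⟩ := hb
    refine ⟨p, fun x hx => ?_⟩
    exact ⟨p.takeUntil x hx, fun y hy => hp y (SimpleGraph.Walk.support_takeUntil_subset _ _ hy)⟩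
  refine ⟨⟨a, hmem⟩, hsub, ?_, ?_⟩
  · exact connected_induce_iff_rIn.2 ⟨⟨a, hmem⟩, fun b hb c hc => (hR b hb).symm.trans (hR c hc)⟩
  · intro C' hCC' hC'A hconn
    have h2 := connected_induce_iff_rIn.1 hconn
    refine Set.Subset.antisymm (fun b hb => ?_) hCC'
    exact (h2.2 a (hCC' hmem) b hb).mono hC'A

lemma IsCompOf.eq_compOf (h : IsCompOf G A C) (ha : a ∈ C) : C = CompOf G A a := by
  obtain ⟨hne, hCA, hconn, hmax⟩ := h
  have hsub : C ⊆ CompOf G A a := fun b hb =>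
    ((connected_induce_iff_rIn.1 hconn).2 a ha b hb).mono hCA
  exact (hmax (CompOf G A a) hsub (fun b hb => hb.mem_right) (isCompOf_compOf (hCA ha)).2.2.1).symm

lemma IsCompOf.eq_of_mem {C' : Set V} (h : IsCompOf G A C) (h' : IsCompOf G A C')
    (ha : a ∈ C) (ha' : a ∈ C') : C = C' := by
  rw [h.eq_compOf ha, h'.eq_compOf ha']

lemma IsCompOf.adj_mem (h : IsCompOf G A C) (hb : b ∈ C) (ha : a ∈ A) (hadj : G.Adj a b) :
    a ∈ C := by
  rw [h.eq_compOf hb]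
  exact RIn.of_adj (h.2.1 hb) ha hadj.symm

lemma IsCompOf.mem_comp (ha : a ∈ A) : ∃ C, IsCompOf G A C ∧ a ∈ C :=
  ⟨CompOf G A a, isCompOf_compOf ha, RIn.rfl ha⟩

end AuxRIn
section AuxRel

variable {G : SimpleGraph V} {A B : Set V} {a b c u v : V} {le : V → V → Prop} {d k : ℕ}

/-- `v` is maximal among elements of `A`. -/
def MaxIn (le : V → V → Prop) (A : Set V) (v : V) : Prop := ∀ w ∈ A, le v w → w = v

/-- The incomparable neighbours of `v` inside `A`. -/
def SsetIn (G : SimpleGraph V) (le : V → V → Prop) (A : Set V) (v : V) : Set V :=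
  {u ∈ A | G.Adj u v ∧ ¬ le u v ∧ ¬ le v u}

/-- The strict predecessors of `u` inside `A`. -/
def DownIn (le : V → V → Prop) (A : Set V) (u : V) : Set V :=
  {w ∈ A | le w u ∧ w ≠ u}

/-- The elimination-order-to-degree-`d` conditions, relativized to `A`. -/
def ElimOn (G : SimpleGraph V) (d : ℕ) (le : V → V → Prop) (A : Set V) : Prop :=
  ∀ v ∈ A, SsetIn G le A v = ∅ ∨
    (MaxIn le A v ∧ (SsetIn G le A v).ncard ≤ d ∧
      ∀ u ∈ SsetIn G le A v, DownIn le A u = DownIn le A v)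

/-- The `d`-height condition, relativized to `A`. -/
def HtOn (le : V → V → Prop) (A : Set V) (k : ℕ) : Prop :=
  ∀ s : Set V, s ⊆ A → IsChainOf le s → {v ∈ s | ¬ MaxIn le A v}.ncard ≤ k

/-- `le` only relates elements of `A` (or equal elements). -/
def Supp (le : V → V → Prop) (A : Set V) : Prop :=
  ∀ a b, le a b → a = b ∨ (a ∈ A ∧ b ∈ A)

lemma MaxIn.mono (hBA : B ⊆ A) (h : MaxIn le A v) : MaxIn le B v :=
  fun w hw => h w (hBA hw)

lemma ssetIn_mono (hBA : B ⊆ A) : SsetIn G le B v ⊆ SsetIn G le A v :=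
  fun u hu => ⟨hBA hu.1, hu.2⟩

lemma downIn_inter (hBA : B ⊆ A) : DownIn le B u = DownIn le A u ∩ B := by
  ext x; exact ⟨fun h => ⟨⟨hBA h.1, h.2⟩, h.1⟩, fun h => ⟨h.2, h.1.2⟩⟩

lemma ElimOn.mono [Fintype V] (hBA : B ⊆ A) (h : ElimOn G d le A) : ElimOn G d le B := by
  intro v hv
  by_cases hS : SsetIn G le B v = ∅
  · exact Or.inl hS
  rcases h v (hBA hv) with hA | ⟨hmax, hcard, hdown⟩
  · exact absurd (Set.eq_empty_of_subset_empty (hA ▸ ssetIn_mono hBA)) hS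
  refine Or.inr ⟨hmax.mono hBA, le_trans (Set.ncard_le_ncard (ssetIn_mono hBA)
    (Set.toFinite _)) hcard, fun u hu => ?_⟩
  rw [downIn_inter hBA, downIn_inter hBA, hdown u (ssetIn_mono hBA hu)]

lemma HtOn.mono [Fintype V] (hBA : B ⊆ A) (h : HtOn le A k) : HtOn le B k := by
  intro s hs hchain
  refine le_trans (Set.ncard_le_ncard (fun x hx => ?_) (Set.toFinite _))
    (h s (hs.trans hBA) hchain)
  exact ⟨hx.1, fun hmax => hx.2 (hmax.mono hBA)⟩

/-- A finite nonempty chain has a least element. -/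
lemma exists_least (htr : ∀ a b c, le a b → le b c → le a c) :
    ∀ s : Finset V, s.Nonempty → (∀ a ∈ s, ∀ b ∈ s, le a b ∨ le b a) →
      ∃ m ∈ s, ∀ x ∈ s, le m x := by
  classical
  intro s
  induction s using Finset.induction_on with
  | empty => rintro ⟨x, hx⟩; simp at hx
  | @insert a s ha ih =>
      intro _ hchain
      have hrefl : le a a := by
        rcases hchain a (Finset.mem_insert_self a s) a (Finset.mem_insert_self a s) with h | h <;>
          exact h
      by_cases hs : s.Nonempty
      · obtain ⟨m, hm, hmle⟩ := ih hs fun x hx y hy =>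
          hchain x (Finset.mem_insert_of_mem hx) y (Finset.mem_insert_of_mem hy)
        rcases hchain a (Finset.mem_insert_self a s) m (Finset.mem_insert_of_mem hm) with
          ham | hma
        · refine ⟨a, Finset.mem_insert_self a s, fun x hx => ?_⟩
          rcases Finset.mem_insert.1 hx with h | h
          · subst h; exact hrefl
          · exact htr _ _ _ ham (hmle x h)
        · refine ⟨m, Finset.mem_insert_of_mem hm, fun x hx => ?_⟩
          rcases Finset.mem_insert.1 hx with h | h
          · subst h; exact hma
          · exact hmle x h
      · simp only [Finset.not_nonempty_iff_eq_empty] at hs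
        subst hs
        refine ⟨a, Finset.mem_insert_self a _, fun x hx => ?_⟩
        rcases Finset.mem_insert.1 hx with h | h
        · subst h; exact hrefl
        · simp at h

end AuxRel
section Bwd

variable {G : SimpleGraph V} {A : Set V} {le : V → V → Prop} {d k : ℕ}

lemma prop_walk {P : V → Prop} (hstep : ∀ y z, P y → y ∈ A → z ∈ A → G.Adj y z → P z) :
    ∀ {a b : V} (p : G.Walk a b), (∀ x ∈ p.support, x ∈ A) → P a → P b := by
  intro a b p
  induction p with
  | nil => exact fun _ h => h
  | @cons u v w h q ih =>
      intro hp hP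
      exact ih (fun x hx => hp x (by simp [hx]))
        (hstep u v hP (hp u (by simp)) (hp v (by simp)) h)

lemma bwd [Fintype V] (G : SimpleGraph V) (d : ℕ) :
    ∀ (n : ℕ) (A : Set V) (k : ℕ) (le : V → V → Prop), A.ncard ≤ n →
      IsTreeOrder le → ElimOn G d le A → HtOn le A k → EdLE G d A k := by
  intro n
  induction n with
  | zero =>
      intro A k le hn _ _ _
      have hA : A = ∅ := (Set.ncard_eq_zero (Set.toFinite A)).1 (Nat.le_zero.1 hn)
      exact EdLE.base A k (by simp [hA])
  | succ n ih =>
      intro A k le hn htree helim hht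
      by_cases hd : ∀ v ∈ A, degreeIn G A v ≤ d
      · exact EdLE.base A k hd
      by_cases hc : (G.induce A).Connected
      · -- connected case
        have hd' := hd
        push_neg at hd'
        obtain ⟨v0, hv0A, hdeg0⟩ := hd'
        have hdeg0' : ¬ degreeIn G A v0 ≤ d := by omega
        obtain ⟨-, hreach⟩ := connected_induce_iff_rIn.1 hc
        -- Case I is impossible
        have hCaseI : ¬ ∃ x ∈ A, MaxIn le A x ∧ DownIn le A x = ∅ ∧
            (SsetIn G le A x).Nonempty := by
          rintro ⟨x, hxA, hmaxx, hdownx, hSx⟩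
          set Q : V → Prop := fun z => MaxIn le A z ∧ DownIn le A z = ∅ with hQdef
          have hstep : ∀ y z, Q y → y ∈ A → z ∈ A → G.Adj y z → Q z := by
            rintro y z ⟨hmaxy, hdowny⟩ hyA hzA hadj
            have hne : z ≠ y := hadj.ne'
            have h1 : ¬ le z y := by
              intro h
              exact (Set.eq_empty_iff_forall_notMem.1 hdowny z) ⟨hzA, h, hne⟩
            have h2 : ¬ le y z := fun h => hne (hmaxy z hzA h)
            have hzS : z ∈ SsetIn G le A y := ⟨hzA, hadj.symm, h1, h2⟩
            have hyS : y ∈ SsetIn G le A z := ⟨hyA, hadj, h2, h1⟩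
            rcases helim z hzA with hS | ⟨hmaxz, -, hdwn⟩
            · rw [hS] at hyS; exact absurd hyS (Set.notMem_empty y)
            · refine ⟨hmaxz, ?_⟩
              rw [← hdwn y hyS]; exact hdowny
          have hQall : ∀ z ∈ A, Q z := by
            intro z hz
            obtain ⟨p, hp⟩ := hreach x hxA z hz
            exact prop_walk hstep p hp ⟨hmaxx, hdownx⟩
          obtain ⟨hmax0, hdown0⟩ := hQall v0 hv0A
          have hsub : A ∩ G.neighborSet v0 ⊆ SsetIn G le A v0 := by
            rintro u ⟨huA, hu⟩
            have hadj : G.Adj v0 u := hu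
            have hne : u ≠ v0 := hadj.ne'
            refine ⟨huA, hadj.symm, fun h => ?_, fun h => hne (hmax0 u huA h)⟩
            exact (Set.eq_empty_iff_forall_notMem.1 hdown0 u) ⟨huA, h, hne⟩
          have hSne : (SsetIn G le A v0).Nonempty := by
            have hpos : (A ∩ G.neighborSet v0).Nonempty := by
              rw [← Set.ncard_pos (Set.toFinite _)]
              have hlt : d < (A ∩ G.neighborSet v0).ncard := hdeg0
              omega
            exact hpos.mono hsub
          rcases helim v0 hv0A with hS | ⟨-, hcard, -⟩
          · rw [hS] at hSne; simp at hSne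
          · exact hdeg0' (le_trans (Set.ncard_le_ncard hsub (Set.toFinite _)) hcard)
        -- find a global minimum r of A
        have hDleast : ∀ x ∈ A, ∃ m, (m ∈ A ∧ le m x) ∧ ∀ w ∈ A, le w x → le m w := by
          intro x hx
          have hfin : {w ∈ A | le w x}.Finite := Set.toFinite _
          obtain ⟨m, hm, hmle⟩ := exists_least htree.trans hfin.toFinset
            (by rw [Set.Finite.toFinset_nonempty]; exact ⟨x, hx, htree.refl x⟩)
            (by
              intro a ha b hb
              rw [Set.Finite.mem_toFinset] at ha hb
              exact htree.downLinear x a b ha.2 hb.2)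
          rw [Set.Finite.mem_toFinset] at hm
          exact ⟨m, hm, fun w hw hwx => hmle w (by rw [Set.Finite.mem_toFinset]; exact ⟨hw, hwx⟩)⟩
        obtain ⟨r, ⟨hrA, hrv0⟩, hrlb⟩ := hDleast v0 hv0A
        set P : V → Prop := fun z => le r z ∧ ∀ w ∈ A, le w z → le r w with hPdef
        have hstep : ∀ y z, P y → y ∈ A → z ∈ A → G.Adj y z → P z := by
          rintro y z ⟨hry, hylb⟩ hyA hzA hadj
          by_cases hyz : le y z
          · refine ⟨htree.trans _ _ _ hry hyz, fun w hwA hwz => ?_⟩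
            rcases htree.downLinear z w y hwz hyz with hwy | hyw
            · exact hylb w hwA hwy
            · exact htree.trans _ _ _ hry hyw
          by_cases hzy : le z y
          · exact ⟨hylb z hzA hzy, fun w hwA hwz => hylb w hwA (htree.trans _ _ _ hwz hzy)⟩
          -- incomparable
          have hzS : z ∈ SsetIn G le A y := ⟨hzA, hadj.symm, hzy, hyz⟩
          have hyS : y ∈ SsetIn G le A z := ⟨hyA, hadj, hyz, hzy⟩
          rcases helim y hyA with hS | ⟨hmaxy, -, hdwny⟩
          · rw [hS] at hzS; exact absurd hzS (Set.notMem_empty z)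
          have hdeq : DownIn le A z = DownIn le A y := hdwny z hzS
          have hdy : (DownIn le A y).Nonempty := by
            by_contra hdy
            rw [Set.not_nonempty_iff_eq_empty] at hdy
            exact hCaseI ⟨y, hyA, hmaxy, hdy, z, hzS⟩
          obtain ⟨w0, hw0A, hw0y, hw0ne⟩ := hdy
          have hrz : le r z := by
            have hw0z : w0 ∈ DownIn le A z := by
              rw [hdeq]; exact ⟨hw0A, hw0y, hw0ne⟩
            exact htree.trans _ _ _ (hylb w0 hw0A hw0y) hw0z.2.1
          refine ⟨hrz, fun w hwA hwz => ?_⟩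
          by_cases hweq : w = z
          · subst hweq; exact hrz
          · have hwy : w ∈ DownIn le A y := by
              rw [← hdeq]; exact ⟨hwA, hwz, hweq⟩
            exact hylb w hwy.1 hwy.2.1
        have hr : ∀ x ∈ A, le r x := by
          intro x hx
          obtain ⟨p, hp⟩ := hreach v0 hv0A x hx
          exact (prop_walk hstep p hp ⟨hrv0, hrlb⟩).1
        have hrnm : ¬ MaxIn le A r := by
          intro hmax
          have hAr : ∀ x ∈ A, x = r := fun x hx => hmax x hx (hr x hx)
          apply hdeg0'
          have hemp : A ∩ G.neighborSet v0 = ∅ := by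
            rw [Set.eq_empty_iff_forall_notMem]
            rintro u ⟨huA, hu⟩
            have h1 : u = r := hAr u huA
            have h2 : v0 = r := hAr v0 hv0A
            rw [SimpleGraph.mem_neighborSet, h1, h2] at hu
            exact G.loopless.irrefl r hu
          show (A ∩ G.neighborSet v0).ncard ≤ d
          rw [hemp]
          simp
        have hk1 : 1 ≤ k := by
          have h1 := hht {r} (by simpa using hrA)
            (by
              intro a ha b hb
              simp only [Set.mem_singleton_iff] at ha hb
              subst ha; subst hb
              exact Or.inl (htree.refl _))
          have heq : {v ∈ ({r} : Set V) | ¬ MaxIn le A v} = {r} := by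
            ext x
            simp only [Set.mem_setOf_eq, Set.mem_singleton_iff]
            exact ⟨fun h => h.1, fun h => ⟨h, h ▸ hrnm⟩⟩
          rw [heq] at h1
          simpa using h1
        obtain ⟨k', rfl⟩ : ∃ k', k = k' + 1 := ⟨k - 1, by omega⟩
        have hsubA : A \ {r} ⊆ A := Set.diff_subset
        have hht' : HtOn le (A \ {r}) k' := by
          intro s hs hchain
          have hrs : r ∉ s := fun h => (hs h).2 rfl
          have hchain' : IsChainOf le (insert r s) := by
            intro a ha b hb
            rcases Set.mem_insert_iff.1 ha with rfl | ha'
            · rcases Set.mem_insert_iff.1 hb with rfl | hb'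
              · exact Or.inl (htree.refl _)
              · exact Or.inl (hr b (hs hb').1)
            · rcases Set.mem_insert_iff.1 hb with rfl | hb'
              · exact Or.inr (hr a (hs ha').1)
              · exact hchain a ha' b hb'
          have h1 := hht (insert r s) (Set.insert_subset hrA (hs.trans hsubA)) hchain'
          have h2 : insert r {v ∈ s | ¬ MaxIn le (A \ {r}) v} ⊆
              {v ∈ insert r s | ¬ MaxIn le A v} := by
            rintro x hx
            rcases Set.mem_insert_iff.1 hx with rfl | hx'
            · exact ⟨Set.mem_insert _ _, hrnm⟩
            · exact ⟨Set.mem_insert_of_mem _ hx'.1, fun hmax => hx'.2 (hmax.mono hsubA)⟩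
          have h3 : r ∉ {v ∈ s | ¬ MaxIn le (A \ {r}) v} := fun h => hrs h.1
          have h4 := Set.ncard_le_ncard h2 (Set.toFinite _)
          rw [Set.ncard_insert_of_notMem h3 (Set.toFinite _)] at h4
          omega
        have hlt : (A \ {r}).ncard ≤ n := by
          have := Set.ncard_diff_singleton_lt_of_mem hrA (Set.toFinite A)
          omega
        exact EdLE.conn A k' hd hc r hrA (ih (A \ {r}) k' le hlt htree (helim.mono hsubA) hht')
      · -- disconnected case
        refine EdLE.disconn A k hd hc fun C hC => ?_
        have hCA : C ⊆ A := hC.2.1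
        have hlt : C.ncard < A.ncard := by
          refine Set.ncard_lt_ncard (Set.ssubset_iff_subset_ne.2 ⟨hCA, ?_⟩) (Set.toFinite A)
          rintro rfl
          exact hc hC.2.2.1
        exact ih C k le (by omega) htree (helim.mono hCA) (hht.mono hCA)

end Bwd
section Fwd

variable {G : SimpleGraph V} {d : ℕ}

lemma fwd [Fintype V] {G : SimpleGraph V} {d : ℕ} {A : Set V} {k : ℕ} (h : EdLE G d A k) :
    ∃ le : V → V → Prop, IsTreeOrder le ∧ ElimOn G d le A ∧ HtOn le A k ∧ Supp le A := by
  induction h with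
  | base A k hdeg =>
      refine ⟨Eq, ⟨fun a => rfl, fun a b h _ => h, fun a b c h h' => h.trans h',
        fun a b c hba hca => by subst hba; subst hca; exact Or.inl rfl⟩,
        fun v hv => ?_, fun s hs hchain => ?_, fun a b h => Or.inl h⟩
      · by_cases hS : SsetIn G Eq A v = ∅
        · exact Or.inl hS
        refine Or.inr ⟨fun w _ h => h.symm, ?_, fun u hu => ?_⟩
        · have heq : SsetIn G Eq A v = A ∩ G.neighborSet v := by
            ext u
            constructor
            · rintro ⟨huA, hadj, -, -⟩; exact ⟨huA, hadj.symm⟩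
            · rintro ⟨huA, hadj⟩
              exact ⟨huA, hadj.symm, fun h => hadj.ne (h.symm), fun h => hadj.ne h⟩
          rw [heq]
          exact hdeg v hv
        · have h1 : DownIn Eq A u = ∅ := by
            rw [Set.eq_empty_iff_forall_notMem]; rintro x ⟨-, rfl, hne⟩; exact hne rfl
          have h2 : DownIn Eq A v = ∅ := by
            rw [Set.eq_empty_iff_forall_notMem]; rintro x ⟨-, rfl, hne⟩; exact hne rfl
          rw [h1, h2]
      · have : {v ∈ s | ¬ MaxIn Eq A v} = ∅ := by
          rw [Set.eq_empty_iff_forall_notMem]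
          rintro x ⟨-, hmax⟩
          exact hmax fun w _ h => h.symm
        rw [this]; simp
  | conn A k hd hc v hv h ih =>
      obtain ⟨le', htree', helim', hht', hsupp'⟩ := ih
      have hAB : A \ {v} ⊆ A := Set.diff_subset
      set le : V → V → Prop := fun a b => a = b ∨ (b ∈ A ∧ b ≠ v ∧ (a = v ∨ le' a b))
        with hledef
      have hmem' : ∀ {x y : V}, le' x y → x ≠ y → x ∈ A \ {v} ∧ y ∈ A \ {v} := by
        intro x y hxy hne
        rcases hsupp' x y hxy with rfl | h
        · exact absurd rfl hne
        · exact h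
      have hvle : ∀ b ∈ A, le v b := by
        intro b hb
        by_cases hbv : b = v
        · exact Or.inl hbv.symm
        · exact Or.inr ⟨hb, hbv, Or.inl rfl⟩
      have htree : IsTreeOrder le := by
        refine ⟨fun a => Or.inl rfl, ?_, ?_, ?_⟩
        · rintro a b (rfl | ⟨hbA, hbv, h1⟩) hba
          · rfl
          rcases hba with rfl | ⟨haA, hav, h2⟩
          · rfl
          rcases h1 with rfl | h1
          · exact absurd rfl hav
          rcases h2 with rfl | h2
          · exact absurd rfl hbv
          exact (htree'.antisymm a b h1 h2).symm ▸ rfl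
        · rintro a b c (rfl | ⟨hbA, hbv, h1⟩) hbc
          · exact hbc
          rcases hbc with rfl | ⟨hcA, hcv, h2⟩
          · exact Or.inr ⟨hbA, hbv, h1⟩
          refine Or.inr ⟨hcA, hcv, ?_⟩
          rcases h1 with rfl | h1
          · exact Or.inl rfl
          rcases h2 with rfl | h2
          · exact absurd rfl hbv
          exact Or.inr (htree'.trans _ _ _ h1 h2)
        · rintro a b c hba hca
          by_cases hbc : b = c
          · exact Or.inl (Or.inl hbc)
          rcases hba with rfl | ⟨haA, hav, h1⟩
          · exact Or.inr hca
          rcases hca with rfl | ⟨-, -, h2⟩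
          · exact Or.inl (Or.inr ⟨haA, hav, h1⟩)
          rcases h1 with rfl | h1
          · -- b = v
            rcases h2 with rfl | h2
            · exact absurd rfl hbc
            by_cases hca2 : c = a
            · subst hca2; exact Or.inl (Or.inr ⟨haA, hav, Or.inl rfl⟩)
            · have hcmem := (hmem' h2 hca2).1
              exact Or.inl (Or.inr ⟨hcmem.1, hcmem.2, Or.inl rfl⟩)
          rcases h2 with rfl | h2
          · by_cases hba2 : b = a
            · subst hba2; exact Or.inr (Or.inr ⟨haA, hav, Or.inl rfl⟩)
            · have hbmem := (hmem' h1 hba2).1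
              exact Or.inr (Or.inr ⟨hbmem.1, hbmem.2, Or.inl rfl⟩)
          rcases htree'.downLinear a b c h1 h2 with h3 | h3
          · have hcmem := (hmem' h3 hbc).2
            exact Or.inl (Or.inr ⟨hcmem.1, hcmem.2, Or.inr h3⟩)
          · by_cases hcb : c = b
            · exact Or.inl (Or.inl hcb.symm)
            have hbmem := (hmem' h3 hcb).2
            exact Or.inr (Or.inr ⟨hbmem.1, hbmem.2, Or.inr h3⟩)
      have hSeq : ∀ w ∈ A, w ≠ v → SsetIn G le A w = SsetIn G le' (A \ {v}) w := by
        intro w hwA hwv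
        ext u
        constructor
        · rintro ⟨huA, hadj, h1, h2⟩
          have huv : u ≠ v := by
            rintro rfl
            exact h1 (hvle w hwA)
          refine ⟨⟨huA, huv⟩, hadj, fun h => ?_, fun h => ?_⟩
          · exact h1 (Or.inr ⟨hwA, hwv, Or.inr h⟩)
          · exact h2 (Or.inr ⟨huA, huv, Or.inr h⟩)
        · rintro ⟨⟨huA, huv⟩, hadj, h1, h2⟩
          refine ⟨huA, hadj, fun h => ?_, fun h => ?_⟩
          · rcases h with rfl | ⟨-, -, (rfl | h)⟩
            · exact hadj.ne rfl
            · exact huv rfl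
            · exact h1 h
          · rcases h with rfl | ⟨-, -, (rfl | h)⟩
            · exact hadj.ne rfl
            · exact hwv rfl
            · exact h2 h
      have hDows : ∀ {u : V}, u ∈ A → u ≠ v →
          DownIn le A u = insert v (DownIn le' (A \ {v}) u) := by
        intro u huA huv
        ext x
        constructor
        · rintro ⟨hxA, hlex, hxu⟩
          rcases hlex with rfl | ⟨-, -, (rfl | hlex)⟩
          · exact absurd rfl hxu
          · exact Set.mem_insert _ _
          · exact Set.mem_insert_of_mem _ ⟨(hmem' hlex hxu).1, hlex, hxu⟩
        · rintro (rfl | ⟨hxm, hlex, hxu⟩)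
          · exact ⟨hv, hvle u huA, fun h => huv h.symm⟩
          · exact ⟨hxm.1, Or.inr ⟨huA, huv, Or.inr hlex⟩, hxu⟩
      have helim : ElimOn G d le A := by
        intro w hwA
        by_cases hwv : w = v
        · subst hwv
          refine Or.inl (Set.eq_empty_iff_forall_notMem.2 ?_)
          rintro u ⟨huA, -, -, h2⟩
          exact h2 (hvle u huA)
        rcases helim' w ⟨hwA, hwv⟩ with hS | ⟨hmax, hcard, hdq⟩
        · exact Or.inl (by rw [hSeq w hwA hwv, hS])
        refine Or.inr ⟨?_, ?_, ?_⟩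
        · intro x hxA hwx
          rcases hwx with rfl | ⟨hxA', hxv, (rfl | hwx)⟩
          · rfl
          · exact absurd rfl hwv
          · exact hmax x ⟨hxA', hxv⟩ hwx
        · rw [hSeq w hwA hwv]; exact hcard
        · intro u hu
          have hu' : u ∈ SsetIn G le' (A \ {v}) w := by rw [← hSeq w hwA hwv]; exact hu
          have huA := hu'.1.1
          have huv := hu'.1.2
          rw [hDows huA huv, hDows hwA hwv, hdq u hu']
      have hht : HtOn le A (k + 1) := by
        intro s hs hchain
        have hchain' : IsChainOf le' (s \ {v}) := by
          rintro a ⟨has, hav⟩ b ⟨hbs, hbv⟩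
          rcases hchain a has b hbs with h | h
          · rcases h with rfl | ⟨-, -, (rfl | h)⟩
            · exact Or.inl (htree'.refl _)
            · exact absurd rfl hav
            · exact Or.inl h
          · rcases h with rfl | ⟨-, -, (rfl | h)⟩
            · exact Or.inl (htree'.refl _)
            · exact absurd rfl hbv
            · exact Or.inr h
        have hsub2 : {x ∈ s | ¬ MaxIn le A x} ⊆
            insert v {x ∈ s \ {v} | ¬ MaxIn le' (A \ {v}) x} := by
          rintro x ⟨hxs, hxmax⟩
          by_cases hxv : x = v
          · exact hxv ▸ Set.mem_insert _ _
          refine Set.mem_insert_of_mem _ ⟨⟨hxs, hxv⟩, fun hmax => hxmax ?_⟩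
          intro y hyA hxy
          rcases hxy with rfl | ⟨hyA', hyv, (rfl | hxy)⟩
          · rfl
          · exact absurd rfl hxv
          · exact hmax y ⟨hyA', hyv⟩ hxy
        calc {x ∈ s | ¬ MaxIn le A x}.ncard
            ≤ (insert v {x ∈ s \ {v} | ¬ MaxIn le' (A \ {v}) x}).ncard :=
              Set.ncard_le_ncard hsub2 (Set.toFinite _)
          _ ≤ {x ∈ s \ {v} | ¬ MaxIn le' (A \ {v}) x}.ncard + 1 :=
              Set.ncard_insert_le _ _
          _ ≤ k + 1 := by
              have := hht' (s \ {v})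
                (fun x hx => ⟨hs hx.1, hx.2⟩) hchain'
              omega
      refine ⟨le, htree, helim, hht, ?_⟩
      rintro a b (rfl | ⟨hbA, hbv, (rfl | h)⟩)
      · exact Or.inl rfl
      · exact Or.inr ⟨hv, hbA⟩
      · by_cases hab : a = b
        · exact Or.inl hab
        · exact Or.inr ⟨((hmem' h hab).1).1, hbA⟩
  | disconn A k hd hc h ih =>
      choose f htreeC helimC hhtC hsuppC using ih
      set le : V → V → Prop := fun a b => a = b ∨
        ∃ C, ∃ hC : IsCompOf G A C, f C hC a b ∧ a ∈ C ∧ b ∈ C with hledef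
      have huniq : ∀ {C C' : Set V} (hC : IsCompOf G A C) (hC' : IsCompOf G A C') {x : V},
          x ∈ C → x ∈ C' → C = C' := by
        intro C C' hC hC' x hx hx'
        exact hC.eq_of_mem hC' hx hx'
      have htree : IsTreeOrder le := by
        refine ⟨fun a => Or.inl rfl, ?_, ?_, ?_⟩
        · rintro a b (rfl | ⟨C, hC, hab, haC, hbC⟩) hba
          · rfl
          rcases hba with rfl | ⟨C', hC', hba, hbC', haC'⟩
          · rfl
          obtain rfl := huniq hC hC' haC haC'
          exact ((htreeC C hC).antisymm a b hab hba).symm ▸ rfl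
        · rintro a b c (rfl | ⟨C, hC, hab, haC, hbC⟩) hbc
          · exact hbc
          rcases hbc with rfl | ⟨C', hC', hbc, hbC', hcC'⟩
          · exact Or.inr ⟨C, hC, hab, haC, hbC⟩
          obtain rfl := huniq hC hC' hbC hbC'
          exact Or.inr ⟨C, hC, (htreeC C hC).trans _ _ _ hab hbc, haC, hcC'⟩
        · rintro a b c hba hca
          rcases hba with rfl | ⟨C, hC, hba, hbC, haC⟩
          · exact Or.inr hca
          rcases hca with rfl | ⟨C', hC', hca, hcC', haC'⟩
          · exact Or.inl (Or.inr ⟨C, hC, hba, hbC, haC⟩)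
          obtain rfl := huniq hC hC' haC haC'
          rcases (htreeC C hC).downLinear a b c hba hca with h3 | h3
          · exact Or.inl (Or.inr ⟨C, hC, h3, hbC, hcC'⟩)
          · exact Or.inr (Or.inr ⟨C, hC, h3, hcC', hbC⟩)
      have helim : ElimOn G d le A := by
        intro w hwA
        obtain ⟨C, hC, hwC⟩ := IsCompOf.mem_comp hwA
        have hSeq : SsetIn G le A w = SsetIn G (f C hC) C w := by
          ext u
          constructor
          · rintro ⟨huA, hadj, h1, h2⟩
            have huC : u ∈ C := hC.adj_mem hwC huA hadj
            refine ⟨huC, hadj, fun hf => ?_, fun hf => ?_⟩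
            · exact h1 (Or.inr ⟨C, hC, hf, huC, hwC⟩)
            · exact h2 (Or.inr ⟨C, hC, hf, hwC, huC⟩)
          · rintro ⟨huC, hadj, h1, h2⟩
            refine ⟨hC.2.1 huC, hadj, fun hle => ?_, fun hle => ?_⟩
            · rcases hle with rfl | ⟨C', hC', hf, huC', hwC'⟩
              · exact hadj.ne rfl
              · obtain rfl := huniq hC hC' hwC hwC'
                exact h1 hf
            · rcases hle with rfl | ⟨C', hC', hf, hwC', huC'⟩
              · exact hadj.ne rfl
              · obtain rfl := huniq hC hC' hwC hwC'
                exact h2 hf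
        have hDeq : ∀ u ∈ C, DownIn le A u = DownIn (f C hC) C u := by
          intro u huC
          ext x
          constructor
          · rintro ⟨hxA, hlex, hne⟩
            rcases hlex with rfl | ⟨C', hC', hf, hxC', huC'⟩
            · exact absurd rfl hne
            · obtain rfl := huniq hC hC' huC huC'
              exact ⟨hxC', hf, hne⟩
          · rintro ⟨hxC, hf, hne⟩
            exact ⟨hC.2.1 hxC, Or.inr ⟨C, hC, hf, hxC, huC⟩, hne⟩
        rcases helimC C hC w hwC with hS | ⟨hmax, hcard, hdq⟩
        · exact Or.inl (by rw [hSeq, hS])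
        refine Or.inr ⟨?_, ?_, ?_⟩
        · intro x hxA hwx
          rcases hwx with rfl | ⟨C', hC', hf, hwC', hxC'⟩
          · rfl
          obtain rfl := huniq hC hC' hwC hwC'
          exact hmax x hxC' hf
        · rw [hSeq]; exact hcard
        · intro u hu
          have hu' : u ∈ SsetIn G (f C hC) C w := by rw [← hSeq]; exact hu
          rw [hDeq u hu'.1, hDeq w hwC, hdq u hu']
      have hht : HtOn le A k := by
        intro s hs hchain
        rcases s.eq_empty_or_nonempty with rfl | ⟨a, has⟩
        · simp [Set.sep_eq_empty_iff_mem_false]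
        obtain ⟨C, hC, haC⟩ := IsCompOf.mem_comp (hs has)
        have hsC : ∀ x ∈ s, x ∈ C := by
          intro x hxs
          rcases hchain a has x hxs with h | h
          · rcases h with rfl | ⟨C', hC', -, haC', hxC'⟩
            · exact haC
            · obtain rfl := huniq hC hC' haC haC'
              exact hxC'
          · rcases h with rfl | ⟨C', hC', -, hxC', haC'⟩
            · exact haC
            · obtain rfl := huniq hC hC' haC haC'
              exact hxC'
        have hchainC : IsChainOf (f C hC) s := by
          intro x hxs y hys
          rcases hchain x hxs y hys with h | h
          · rcases h with rfl | ⟨C', hC', hf, hxC', hyC'⟩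
            · exact Or.inl ((htreeC C hC).refl _)
            · obtain rfl := huniq hC' hC hxC' (hsC x hxs)
              exact Or.inl hf
          · rcases h with rfl | ⟨C', hC', hf, hyC', hxC'⟩
            · exact Or.inl ((htreeC C hC).refl _)
            · obtain rfl := huniq hC' hC hxC' (hsC x hxs)
              exact Or.inr hf
        have hsub : {x ∈ s | ¬ MaxIn le A x} ⊆ {x ∈ s | ¬ MaxIn (f C hC) C x} := by
          rintro x ⟨hxs, hxmax⟩
          refine ⟨hxs, fun hmax => hxmax ?_⟩
          intro y hyA hxy
          rcases hxy with rfl | ⟨C', hC', hf, hxC', hyC'⟩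
          · rfl
          obtain rfl := huniq hC' hC hxC' (hsC x hxs)
          exact hmax y hyC' hf
        exact le_trans (Set.ncard_le_ncard hsub (Set.toFinite _))
          (hhtC C hC s (fun x hx => hsC x hx) hchainC)
      refine ⟨le, htree, helim, hht, ?_⟩
      rintro a b (rfl | ⟨C, hC, -, haC, hbC⟩)
      · exact Or.inl rfl
      · exact Or.inr ⟨hC.2.1 haC, hC.2.1 hbC⟩

end Fwd
section Univ

variable {G : SimpleGraph V} {le : V → V → Prop}

lemma ssetIn_univ (G : SimpleGraph V) (le : V → V → Prop) (v : V) :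
    SsetIn G le Set.univ v = Sset G le v := by
  ext u; simp [SsetIn, Sset]

lemma maxIn_univ (le : V → V → Prop) (v : V) :
    MaxIn le Set.univ v ↔ IsLeMaximal le v :=
  ⟨fun h w => h w (Set.mem_univ w), fun h w _ => h w⟩

lemma downIn_univ (le : V → V → Prop) (u : V) :
    DownIn le Set.univ u = {w | le w u ∧ w ≠ u} := by
  ext x; simp [DownIn]

lemma sep_maxIn_univ (le : V → V → Prop) (s : Set V) :
    {v ∈ s | ¬ IsLeMaximal le v} = {v ∈ s | ¬ MaxIn le Set.univ v} := by
  ext x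
  exact and_congr_right fun _ => not_congr (maxIn_univ le x).symm

end Univ
/-- `ed_d(G) ≤ k` iff there is an elimination order to degree `d` for `G` in which
every chain contains at most `k` non-maximal vertices. -/
theorem edLE_iff_elimOrderToDeg {V : Type*} [Fintype V] (G : SimpleGraph V) (d k : ℕ) :
    EdLE G d Set.univ k ↔
      ∃ le : V → V → Prop, IsElimOrderToDeg G d le ∧ DHeightLE le k := by
  constructor
  · intro h
    obtain ⟨le, htree, helim, hht, -⟩ := fwd h
    refine ⟨le, ⟨htree, fun v => ?_⟩, fun s hchain => ?_⟩
    · rcases helim v (Set.mem_univ v) with hS | ⟨hmax, hcard, hdq⟩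
      · exact Or.inl (by rw [← ssetIn_univ G le v]; exact hS)
      · refine Or.inr ⟨(maxIn_univ le v).1 hmax,
          by rw [← ssetIn_univ G le v]; exact hcard, fun u hu => ?_⟩
        rw [← downIn_univ le u, ← downIn_univ le v]
        exact hdq u (by rw [ssetIn_univ G le v]; exact hu)
    · rw [sep_maxIn_univ]
      exact hht s (Set.subset_univ s) hchain
  · rintro ⟨le, ⟨htree, hcond⟩, hht⟩
    refine bwd G d Set.univ.ncard Set.univ k le le_rfl htree (fun v _ => ?_)
      (fun s _ hchain => ?_)
    · rcases hcond v with hS | ⟨hmax, hcard, hdq⟩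
      · exact Or.inl (by rw [ssetIn_univ G le v]; exact hS)
      · refine Or.inr ⟨(maxIn_univ le v).2 hmax,
          by rw [ssetIn_univ G le v]; exact hcard, fun u hu => ?_⟩
        rw [downIn_univ le u, downIn_univ le v]
        exact hdq u (by rw [← ssetIn_univ G le v]; exact hu)
    · rw [← sep_maxIn_univ]
      exact hht s hchain
end

section
/- Let G be a finite simple graph with ed_d(G) ≤ k. Then the (k+d)-degree torso of G has tree-depth at most k((k+1)(k+d))^{2^k}. -/
open SimpleGraph Set

variable {V : Type*}

section MyHelpers

variable {V : Type*} {G : SimpleGraph V}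

lemma my_exists_cross_edge {C : Set V} :
    ∀ {u b : V} (p : G.Walk u b), u ∈ C → b ∉ C →
    ∃ a b', a ∈ C ∧ b' ∉ C ∧ G.Adj a b' ∧ a ∈ p.support ∧ b' ∈ p.support := by
  intro u b p
  induction p with
  | nil => intro hu hb; exact absurd hu hb
  | @cons u v w h p ih =>
    intro hu hb
    by_cases hv : v ∈ C
    · obtain ⟨a, b', h1, h2, h3, h4, h5⟩ := ih hv hb
      exact ⟨a, b', h1, h2, h3, by simp [Walk.support_cons, h4],
        by simp [Walk.support_cons, h5]⟩
    · exact ⟨u, v, hu, hv, h, by simp, by simp⟩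

lemma my_exists_truncation {C : Set V} :
    ∀ {u b : V} (p : G.Walk u b), u ∈ C → b ∉ C →
    ∃ b', b' ∉ C ∧ (∃ a, a ∈ C ∧ G.Adj a b') ∧
      ∃ q : G.Walk u b', (∀ w ∈ q.support, w ∈ p.support) ∧
      (∀ w ∈ q.support, w ≠ b' → w ∈ C) := by
  intro u b p
  induction p with
  | nil => intro hu hb; exact absurd hu hb
  | @cons u v w h p ih =>
    intro hu hb
    by_cases hv : v ∈ C
    · obtain ⟨b', hb', hadj, q, hsub, hin⟩ := ih hv hb
      refine ⟨b', hb', hadj, Walk.cons h q, ?_, ?_⟩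
      · intro x hx
        rw [Walk.support_cons] at hx ⊢
        rcases List.mem_cons.mp hx with rfl | hx
        · exact List.mem_cons_self
        · exact List.mem_cons_of_mem _ (hsub x hx)
      · intro x hx hxb
        rw [Walk.support_cons] at hx
        rcases List.mem_cons.mp hx with rfl | hx
        · exact hu
        · exact hin x hx hxb
    · refine ⟨v, hv, ⟨u, hu, h⟩, Walk.cons h Walk.nil, ?_, ?_⟩
      · intro x hx
        rw [Walk.support_cons] at hx ⊢
        rcases List.mem_cons.mp hx with rfl | hx
        · exact List.mem_cons_self
        · simp at hx
          subst hx
          exact List.mem_cons_of_mem _ p.start_mem_support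
      · intro x hx hxb
        rw [Walk.support_cons] at hx
        rcases List.mem_cons.mp hx with rfl | hx
        · exact hu
        · simp at hx; exact absurd hx hxb

lemma my_induce_adj {A : Set V} {a b : ↥A} (h : G.Adj a.1 b.1) : (G.induce A).Adj a b := h

lemma my_adj_of_induce_adj {A : Set V} {a b : ↥A} (h : (G.induce A).Adj a b) : G.Adj a.1 b.1 := h

lemma my_reachable_of_walkIn {A : Set V} :
    ∀ {x y : V} (p : G.Walk x y), (∀ w ∈ p.support, w ∈ A) →
    ∀ (hx : x ∈ A) (hy : y ∈ A), (G.induce A).Reachable ⟨x, hx⟩ ⟨y, hy⟩ := by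
  intro x y p
  induction p with
  | nil => intro _ hx hy; exact Reachable.refl _
  | @cons x v y h p ih =>
    intro hsup hx hy
    have hv : v ∈ A := hsup v (by simp [Walk.support_cons])
    have h1 : (G.induce A).Adj ⟨x, hx⟩ ⟨v, hv⟩ := my_induce_adj h
    exact h1.reachable.trans (ih (fun w hw => hsup w (by simp [Walk.support_cons, hw])) hv hy)

lemma my_walkIn_of_induce_walk {A : Set V} :
    ∀ {a b : ↥A} (_ : (G.induce A).Walk a b),
    ∃ q : G.Walk a.1 b.1, ∀ w ∈ q.support, w ∈ A := by
  intro a b p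
  induction p with
  | nil => exact ⟨Walk.nil, by simp⟩
  | @cons a v b h p ih =>
    obtain ⟨q, hq⟩ := ih
    refine ⟨Walk.cons (my_adj_of_induce_adj h) q, ?_⟩
    intro w hw
    rw [Walk.support_cons] at hw
    rcases List.mem_cons.mp hw with rfl | hw
    · exact a.2
    · exact hq w hw

lemma my_induce_connected_iff {A : Set V} : (G.induce A).Connected ↔
    A.Nonempty ∧ ∀ x ∈ A, ∀ y ∈ A, ∃ p : G.Walk x y, ∀ w ∈ p.support, w ∈ A := by
  constructor
  · intro h
    obtain ⟨hpre, hne⟩ := (connected_iff _).mp h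
    refine ⟨?_, ?_⟩
    · obtain ⟨a⟩ := hne; exact ⟨a.1, a.2⟩
    · intro x hx y hy
      obtain ⟨p⟩ := hpre ⟨x, hx⟩ ⟨y, hy⟩
      exact my_walkIn_of_induce_walk p
  · rintro ⟨⟨a, ha⟩, h⟩
    rw [connected_iff]
    refine ⟨?_, ⟨⟨a, ha⟩⟩⟩
    rintro ⟨x, hx⟩ ⟨y, hy⟩
    obtain ⟨p, hp⟩ := h x hx y hy
    exact my_reachable_of_walkIn p hp hx hy

lemma my_induce_singleton_connected (v : V) : (G.induce ({v} : Set V)).Connected := by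
  rw [my_induce_connected_iff]
  refine ⟨⟨v, rfl⟩, ?_⟩
  intro x hx y hy
  simp only [mem_singleton_iff] at hx hy
  subst hx; subst hy
  exact ⟨Walk.nil, by simp⟩

lemma my_induce_connected_insert {A : Set V} (hA : (G.induce A).Connected) {u w : V}
    (hu : u ∈ A) (h : G.Adj u w) : (G.induce (insert w A)).Connected := by
  rw [my_induce_connected_iff] at hA ⊢
  obtain ⟨hne, hwalk⟩ := hA
  -- helper : from any x in insert w A, walk to w inside insert w A
  have key : ∀ x ∈ insert w A, ∃ p : G.Walk x w, ∀ z ∈ p.support, z ∈ insert w A := by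
    intro x hx
    rcases hx with rfl | hx
    · exact ⟨Walk.nil, by simp⟩
    · obtain ⟨p, hp⟩ := hwalk x hx u hu
      refine ⟨p.append (Walk.cons h Walk.nil), ?_⟩
      intro z hz
      rw [Walk.support_append] at hz
      rcases List.mem_append.mp hz with hz | hz
      · exact mem_insert_of_mem _ (hp z hz)
      · simp [Walk.support_cons] at hz
        exact hz ▸ mem_insert _ _
  refine ⟨⟨w, mem_insert _ _⟩, ?_⟩
  intro x hx y hy
  obtain ⟨p, hp⟩ := key x hx
  obtain ⟨q, hq⟩ := key y hy
  refine ⟨p.append q.reverse, ?_⟩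
  intro z hz
  rw [Walk.support_append] at hz
  rcases List.mem_append.mp hz with hz | hz
  · exact hp z hz
  · exact hq z (by
      have := List.mem_of_mem_tail hz
      rwa [Walk.support_reverse, List.mem_reverse] at this)

lemma my_induce_connected_union {A B : Set V} (hA : (G.induce A).Connected)
    (hB : (G.induce B).Connected) {x : V} (hxA : x ∈ A) (hxB : x ∈ B) :
    (G.induce (A ∪ B)).Connected := by
  rw [my_induce_connected_iff] at hA hB ⊢
  have key : ∀ y ∈ A ∪ B, ∃ p : G.Walk y x, ∀ z ∈ p.support, z ∈ A ∪ B := by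
    intro y hy
    rcases hy with hy | hy
    · obtain ⟨p, hp⟩ := hA.2 y hy x hxA
      exact ⟨p, fun z hz => Or.inl (hp z hz)⟩
    · obtain ⟨p, hp⟩ := hB.2 y hy x hxB
      exact ⟨p, fun z hz => Or.inr (hp z hz)⟩
  refine ⟨⟨x, Or.inl hxA⟩, ?_⟩
  intro y hy z hz
  obtain ⟨p, hp⟩ := key y hy
  obtain ⟨q, hq⟩ := key z hz
  refine ⟨p.append q.reverse, ?_⟩
  intro w hw
  rw [Walk.support_append] at hw
  rcases List.mem_append.mp hw with hw | hw
  · exact hp w hw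
  · exact hq w (by
      have := List.mem_of_mem_tail hw
      rwa [Walk.support_reverse, List.mem_reverse] at this)

end MyHelpers

section MyComp

variable {V : Type*} {G : SimpleGraph V}

lemma my_exists_comp_superset [Finite V] {A C0 : Set V} (h0 : C0.Nonempty)
    (hsub : C0 ⊆ A) (hconn : (G.induce C0).Connected) :
    ∃ C, IsCompOf G A C ∧ C0 ⊆ C := by
  classical
  set fam := {D : Set V | C0 ⊆ D ∧ D ⊆ A ∧ (G.induce D).Connected} with hfam
  have hfin : fam.Finite := (Set.Finite.finite_subsets A.toFinite).subset (fun D hD => hD.2.1)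
  have hne : fam.Nonempty := ⟨C0, subset_rfl, hsub, hconn⟩
  obtain ⟨C, hC, hmax⟩ := Set.Finite.exists_maximalFor Set.ncard fam hfin hne
  refine ⟨C, ⟨h0.mono hC.1, hC.2.1, hC.2.2, ?_⟩, hC.1⟩
  intro C' hCC' hC'A hC'conn
  have hmem : C' ∈ fam := ⟨hC.1.trans hCC', hC'A, hC'conn⟩
  have hcard := hmax hmem (Set.ncard_le_ncard hCC' (Set.toFinite _))
  exact (Set.eq_of_subset_of_ncard_le hCC' hcard.ge (Set.toFinite _)).symm

lemma my_exists_comp_mem [Finite V] {A : Set V} {v : V} (hv : v ∈ A) :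
    ∃ C, IsCompOf G A C ∧ v ∈ C := by
  obtain ⟨C, hC, hsub⟩ := my_exists_comp_superset (C0 := {v}) ⟨v, rfl⟩
    (by simpa using hv) (my_induce_singleton_connected v)
  exact ⟨C, hC, hsub rfl⟩

lemma my_comp_not_adj_out {A C : Set V} (hC : IsCompOf G A C) {u w : V}
    (hu : u ∈ C) (hw : w ∈ A) (hwC : w ∉ C) : ¬ G.Adj u w := by
  intro hadj
  have hconn' : (G.induce (insert w C)).Connected :=
    my_induce_connected_insert hC.2.2.1 hu hadj
  have heq := hC.2.2.2 (insert w C) (Set.subset_insert _ _)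
    (Set.insert_subset hw hC.2.1) hconn'
  exact hwC (heq ▸ Set.mem_insert w C)

lemma my_comp_eq_of_mem {A C C' : Set V} (hC : IsCompOf G A C) (hC' : IsCompOf G A C')
    {x : V} (hx : x ∈ C) (hx' : x ∈ C') : C = C' := by
  have hu : (G.induce (C ∪ C')).Connected :=
    my_induce_connected_union hC.2.2.1 hC'.2.2.1 hx hx'
  have h1 := hC.2.2.2 (C ∪ C') Set.subset_union_left
    (Set.union_subset hC.2.1 hC'.2.1) hu
  have h2 := hC'.2.2.2 (C ∪ C') Set.subset_union_right
    (Set.union_subset hC.2.1 hC'.2.1) hu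
  exact h1.symm.trans h2

lemma my_comp_disjoint {A C C' : Set V} (hC : IsCompOf G A C) (hC' : IsCompOf G A C')
    (hne : C ≠ C') : Disjoint C C' := by
  rw [Set.disjoint_left]
  intro x hx hx'
  exact hne (my_comp_eq_of_mem hC hC' hx hx')

/-- a connected subset of `A` is inside a component that it meets -/
lemma my_comp_subset_of_walkIn {A C S : Set V} (hC : IsCompOf G A C) (hS : S ⊆ A)
    {x : V} (hx : x ∈ S) (hxC : x ∈ C)
    (hwalk : ∀ y ∈ S, ∃ p : G.Walk x y, ∀ w ∈ p.support, w ∈ S) : S ⊆ C := by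
  intro y hy
  by_contra hyC
  obtain ⟨p, hp⟩ := hwalk y hy
  obtain ⟨a, b', ha, hb', hadj, hasup, hbsup⟩ := my_exists_cross_edge (C := C) p hxC hyC
  exact my_comp_not_adj_out hC ha (hS (hp b' hbsup)) hb' hadj

end MyComp

section MyTd

variable {V : Type*} {G : SimpleGraph V}

lemma my_tdle_mono {A : Set V} {k : ℕ} (h : TdLE G A k) :
    ∀ {k'}, k ≤ k' → TdLE G A k' := by
  induction h with
  | empty k => exact fun _ => TdLE.empty _
  | conn A k hc v hv h ih =>
    intro k' hk
    obtain ⟨k'', rfl⟩ : ∃ k'', k' = k'' + 1 := ⟨k' - 1, by omega⟩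
    exact TdLE.conn A k'' hc v hv (ih (by omega))
  | disconn A k hne hc h ih =>
    intro k' hk
    exact TdLE.disconn A k' hne hc (fun C hC => ih C hC hk)

lemma my_tdle_subset [Finite V] {A : Set V} {k : ℕ} (h : TdLE G A k) :
    ∀ B ⊆ A, TdLE G B k := by
  induction h with
  | empty k =>
    intro B hB
    rw [Set.subset_empty_iff.mp hB]
    exact TdLE.empty _
  | conn A k hc v hv h ih =>
    intro B hB
    rcases Set.eq_empty_or_nonempty B with rfl | hBne
    · exact TdLE.empty _
    by_cases hBc : (G.induce B).Connected
    · by_cases hvB : v ∈ B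
      · exact TdLE.conn B k hBc v hvB (ih _ (Set.diff_subset_diff_left hB))
      · exact my_tdle_mono (ih B (Set.subset_diff_singleton hB hvB)) (Nat.le_succ k)
    · refine TdLE.disconn B (k + 1) hBne hBc (fun C hC => ?_)
      by_cases hvC : v ∈ C
      · exact TdLE.conn C k hC.2.2.1 v hvC
          (ih _ (Set.diff_subset_diff_left (hC.2.1.trans hB)))
      · exact my_tdle_mono
          (ih C (Set.subset_diff_singleton (hC.2.1.trans hB) hvC)) (Nat.le_succ k)
  | disconn A k hne hc h ih =>
    intro B hB
    rcases Set.eq_empty_or_nonempty B with rfl | hBne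
    · exact TdLE.empty _
    -- every connected subset of B is inside a component of A
    have key : ∀ S, S ⊆ B → S.Nonempty → (G.induce S).Connected → TdLE G S k := by
      intro S hSB hSne hSconn
      obtain ⟨x, hx⟩ := hSne
      obtain ⟨C, hC, hxC⟩ := my_exists_comp_mem (G := G) (A := A) (hB (hSB hx))
      have hsub : S ⊆ C := by
        refine my_comp_subset_of_walkIn hC (hSB.trans hB) hx hxC ?_
        intro y hy
        exact (my_induce_connected_iff.mp hSconn).2 x hx y hy
      exact ih C hC S hsub
    by_cases hBc : (G.induce B).Connected
    · exact key B subset_rfl hBne hBc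
    · exact TdLE.disconn B k hBne hBc
        (fun C hC => key C hC.2.1 hC.1 hC.2.2.1)

lemma my_tdle_delete_aux [Finite V] {X : Set V} :
    ∀ (N : ℕ) {A : Set V} {k : ℕ}, A.ncard ≤ N → TdLE G (A \ X) k →
    TdLE G A (k + (A ∩ X).ncard) := by
  classical
  intro N
  induction N with
  | zero =>
    intro A k hN h
    have : A = ∅ := by
      rw [← Set.ncard_eq_zero (Set.toFinite _)]; omega
    rw [this]; exact TdLE.empty _
  | succ N ih =>
    intro A k hN h
    rcases Set.eq_empty_or_nonempty A with rfl | hAne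
    · exact TdLE.empty _
    rcases Set.eq_empty_or_nonempty (A ∩ X) with hAX | hAXne
    · have hdisj : ∀ y ∈ A, y ∉ X := by
        intro y hy hyX
        exact (Set.eq_empty_iff_forall_notMem.mp hAX y) ⟨hy, hyX⟩
      have hAX2 : A \ X = A := by
        ext y; exact ⟨fun hh => hh.1, fun hh => ⟨hh, hdisj y hh⟩⟩
      rw [hAX2] at h
      exact my_tdle_mono h (by omega)
    by_cases hAc : (G.induce A).Connected
    · obtain ⟨x, hxA, hxX⟩ := hAXne
      have h1 : TdLE G ((A \ {x}) \ X) k := by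
        have heq : (A \ {x}) \ X = A \ X := by
          ext y; simp only [Set.mem_diff, Set.mem_singleton_iff]
          constructor
          · rintro ⟨⟨ha, _⟩, hb⟩; exact ⟨ha, hb⟩
          · rintro ⟨ha, hb⟩; exact ⟨⟨ha, fun hy => hb (hy ▸ hxX)⟩, hb⟩
        rw [heq]; exact h
      have hN1 : (A \ {x}).ncard ≤ N := by
        have := Set.ncard_diff_singleton_add_one hxA (Set.toFinite _)
        omega
      have h3 := ih hN1 h1
      have h2 : ((A \ {x}) ∩ X).ncard + 1 = (A ∩ X).ncard := by
        have heq : (A \ {x}) ∩ X = (A ∩ X) \ {x} := by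
          ext y; simp only [Set.mem_diff, Set.mem_inter_iff, Set.mem_singleton_iff]; tauto
        rw [heq]
        exact Set.ncard_diff_singleton_add_one (Set.mem_inter hxA hxX) (Set.toFinite _)
      have h4 := TdLE.conn A _ hAc x hxA h3
      refine my_tdle_mono h4 (by omega)
    · refine TdLE.disconn A _ hAne hAc (fun C hC => ?_)
      have hCA : C ⊂ A := by
        refine ⟨hC.2.1, fun hac => ?_⟩
        have : C = A := Set.Subset.antisymm hC.2.1 hac
        rw [this] at hC
        exact hAc hC.2.2.1
      have hN1 : C.ncard ≤ N := by
        have := Set.ncard_lt_ncard hCA (Set.toFinite _)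
        omega
      have h1 : TdLE G (C \ X) k := my_tdle_subset h _ (Set.diff_subset_diff_left hC.2.1)
      have h2 := ih hN1 h1
      refine my_tdle_mono h2 ?_
      have : (C ∩ X).ncard ≤ (A ∩ X).ncard :=
        Set.ncard_le_ncard (Set.inter_subset_inter_left _ hC.2.1) (Set.toFinite _)
      omega

lemma my_tdle_delete [Finite V] {A X : Set V} {k : ℕ} (h : TdLE G (A \ X) k) :
    TdLE G A (k + (A ∩ X).ncard) :=
  my_tdle_delete_aux A.ncard le_rfl h

lemma my_tdle_glue [Finite V] {parts : Set (Set V)} {n : ℕ}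
    (h1 : ∀ P ∈ parts, TdLE G P n)
    (h2 : ∀ P ∈ parts, ∀ Q ∈ parts, P ≠ Q → ∀ u ∈ P, ∀ w ∈ Q, ¬ G.Adj u w) :
    TdLE G (⋃₀ parts) n := by
  set S := ⋃₀ parts with hS
  -- key: a walk within S starting in P stays in P
  have key : ∀ P ∈ parts, ∀ {x y : V}, x ∈ P → (∃ p : G.Walk x y, ∀ w ∈ p.support, w ∈ S) →
      y ∈ P := by
    intro P hP x y hx ⟨p, hp⟩
    clear hS
    induction p with
    | nil => exact hx
    | @cons x v y hadj p ih =>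
      have hv : v ∈ S := hp v (by simp [SimpleGraph.Walk.support_cons])
      obtain ⟨Q, hQ, hvQ⟩ := hv
      have hPQ : P = Q := by
        by_contra hne
        exact h2 P hP Q hQ hne x hx v hvQ hadj
      exact ih (hPQ ▸ hvQ) (fun w hw => hp w (by simp [SimpleGraph.Walk.support_cons, hw]))
  have key2 : ∀ T, T ⊆ S → T.Nonempty → (G.induce T).Connected → TdLE G T n := by
    intro T hTS hTne hTconn
    obtain ⟨x, hx⟩ := hTne
    obtain ⟨P, hP, hxP⟩ := hTS hx
    have hsub : T ⊆ P := by
      intro y hy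
      obtain ⟨p, hp⟩ := (my_induce_connected_iff.mp hTconn).2 x hx y hy
      exact key P hP hxP ⟨p, fun w hw => hTS (hp w hw)⟩
    exact my_tdle_subset (h1 P hP) T hsub
  rcases Set.eq_empty_or_nonempty S with hSe | hSne
  · rw [hSe]; exact TdLE.empty _
  by_cases hSc : (G.induce S).Connected
  · exact key2 S subset_rfl hSne hSc
  · exact TdLE.disconn S n hSne hSc (fun C hC => key2 C hC.2.1 hC.1 hC.2.2.1)

end MyTd

section MyCount

variable {α : Type*} {β : Type*}

lemma my_ncard_biUnion_le [Finite α] {ι : Type*} (F : Finset ι) (f : ι → Set α) :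
    (⋃ i ∈ F, f i).ncard ≤ ∑ i ∈ F, (f i).ncard := by
  classical
  induction F using Finset.induction_on with
  | empty => simp
  | insert a F hnotmem ih =>
    rw [Finset.sum_insert hnotmem, Finset.set_biUnion_insert]
    have := Set.ncard_union_le (f a) (⋃ i ∈ F, f i)
    omega

lemma my_sum_ncard_le [Finite α] {ι : Type*} (F : Finset ι) (f : ι → Set α)
    (hdisj : ∀ i ∈ F, ∀ j ∈ F, i ≠ j → Disjoint (f i) (f j)) :
    ∑ i ∈ F, (f i).ncard ≤ (⋃ i ∈ F, f i).ncard := by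
  classical
  induction F using Finset.induction_on with
  | empty => simp
  | insert a F hnotmem ih =>
    rw [Finset.sum_insert hnotmem]
    have hd : Disjoint (f a) (⋃ i ∈ F, f i) := by
      rw [Set.disjoint_iUnion_right]
      intro i
      rw [Set.disjoint_iUnion_right]
      intro hi
      exact hdisj a (Finset.mem_insert_self _ _) i (Finset.mem_insert_of_mem hi)
        (fun h => hnotmem (h ▸ hi))
    rw [Finset.set_biUnion_insert, Set.ncard_union_eq hd (Set.toFinite _) (Set.toFinite _)]
    have := ih (fun i hi j hj hij =>
      hdisj i (Finset.mem_insert_of_mem hi) j (Finset.mem_insert_of_mem hj) hij)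
    omega

lemma my_pairs_card_le [Finite α] [Finite β] {m : ℕ} :
    ∀ {T : Set α}, T.Finite → ∀ (S : Set (α × β)), (∀ p ∈ S, p.1 ∈ T) →
    (∀ b : α, ({x : β | (b, x) ∈ S}).ncard ≤ m) → S.ncard ≤ T.ncard * m := by
  intro T hT
  refine Set.Finite.induction_on T hT ?_ ?_
  · intro S hS _
    have : S = ∅ := by
      ext p; simpa using fun hp => hS p hp
    simp [this]
  · intro a T hnotmem hTfin ih S hS hfib
    have hsplit : S ⊆ (Prod.mk a '' {x | (a, x) ∈ S}) ∪ {p ∈ S | p.1 ∈ T} := by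
      rintro ⟨b, x⟩ hp
      rcases hS _ hp with rfl | hb
      · exact Or.inl ⟨x, hp, rfl⟩
      · exact Or.inr ⟨hp, hb⟩
    have h1 : (Prod.mk a '' {x | (a, x) ∈ S}).ncard ≤ m := by
      rw [Set.ncard_image_of_injective _ (fun x y h => congrArg Prod.snd h)]
      exact hfib a
    have h2 : ({p ∈ S | p.1 ∈ T}).ncard ≤ T.ncard * m := by
      refine ih _ (fun p hp => hp.2) (fun b => ?_)
      refine le_trans (Set.ncard_le_ncard ?_ (Set.toFinite _)) (hfib b)
      intro x hx
      exact hx.1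
    have h3 := Set.ncard_le_ncard hsplit (Set.toFinite _)
    have h4 := Set.ncard_union_le (Prod.mk a '' {x | (a, x) ∈ S}) {p ∈ S | p.1 ∈ T}
    have h5 : (insert a T).ncard = T.ncard + 1 :=
      Set.ncard_insert_of_notMem hnotmem hTfin
    rw [h5]
    calc S.ncard ≤ _ := h3
      _ ≤ _ := h4
      _ ≤ m + T.ncard * m := by omega
      _ = (T.ncard + 1) * m := by ring

end MyCount

section MyQL

variable {V : Type*}

/-- vertices of `A` of high degree adjacent to the region `R` -/
def myCnt (G : SimpleGraph V) (k d : ℕ) (R A : Set V) : Set V :=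
  {u | u ∈ A ∧ k + d < gdeg G u ∧ ∃ x ∈ R, G.Adj u x}

/-- entry edges of the region `R` into `A` -/
def myEnt (G : SimpleGraph V) (R A : Set V) : Set (V × V) :=
  {p | p.1 ∈ R ∧ p.1 ∉ A ∧ p.2 ∈ A ∧ G.Adj p.1 p.2}

variable {G : SimpleGraph V}

/-- In the base case of the elimination recursion there are no high-degree vertices. -/
lemma my_base_no_high {A B : Set V} {k d j : ℕ}
    (hbase : ∀ v ∈ A, degreeIn G A v ≤ d)
    (hB2 : ∀ u x, u ∈ A → G.Adj u x → x ∉ A → x ∈ B)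
    (hB3 : B.ncard + j ≤ k) [Finite V] :
    ∀ u ∈ A, gdeg G u ≤ k + d := by
  intro u huA
  have h1 : G.neighborSet u ⊆ (A ∩ G.neighborSet u) ∪ B := by
    intro x hx
    by_cases hxA : x ∈ A
    · exact Or.inl ⟨hxA, hx⟩
    · exact Or.inr (hB2 u x huA hx hxA)
  have h2 : gdeg G u ≤ degreeIn G A u + B.ncard := by
    have := Set.ncard_le_ncard h1 (Set.toFinite _)
    have := Set.ncard_union_le (A ∩ G.neighborSet u) B
    unfold gdeg degreeIn
    omega
  have := hbase u huA
  omega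

lemma my_ent_nonempty {R A : Set V} {v0 : V} {k d : ℕ}
    (hRconn : ∀ x ∈ R, ∃ p : G.Walk x v0, ∀ w ∈ p.support, w ∈ R)
    (hv0 : v0 ∉ A) (hne : (myCnt G k d R A).Nonempty) : (myEnt G R A).Nonempty := by
  obtain ⟨u, huA, _, x, hxR, hadj⟩ := hne
  by_cases hxA : x ∈ A
  · obtain ⟨p, hp⟩ := hRconn x hxR
    obtain ⟨a, b', ha, hb', hadj', _, hbsup⟩ := my_exists_cross_edge (C := A) p hxA hv0
    exact ⟨(b', a), hp b' hbsup, hb', ha, hadj'.symm⟩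
  · exact ⟨(x, u), hxR, hxA, huA, hadj.symm⟩

lemma my_QL [Finite V] (k d : ℕ) (R : Set V) (v0 : V)
    (hRlow : ∀ x ∈ R, gdeg G x ≤ k + d)
    (hRconn : ∀ x ∈ R, ∃ p : G.Walk x v0, ∀ w ∈ p.support, w ∈ R) :
    ∀ {A : Set V} {j : ℕ}, EdLE G d A j →
    ∀ B : Set V, (∀ u x, u ∈ A → G.Adj u x → x ∉ A → x ∈ B) →
    B.ncard + j ≤ k → v0 ∉ A →
    (myCnt G k d R A).ncard ≤ (myEnt G R A).ncard * (k + d + 2) ^ j := by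
  intro A j hed
  induction hed with
  | base A j hbase =>
    intro B hB2 hB3 hv0
    have hempty : myCnt G k d R A = ∅ := by
      ext u
      simp only [myCnt, Set.mem_setOf_eq, Set.mem_empty_iff_false, iff_false]
      rintro ⟨huA, hdeg, -⟩
      exact absurd (my_base_no_high hbase hB2 hB3 u huA) (by omega)
    rw [hempty]
    simp
  | conn A j hd hc v hv h ih =>
    intro B hB2 hB3 hv0
    rcases Set.eq_empty_or_nonempty (myCnt G k d R A) with hce | hcne
    · rw [hce]; simp
    rcases Set.eq_empty_or_nonempty (myEnt G R A) with hee | hene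
    · exact absurd (my_ent_nonempty hRconn hv0 hcne) (by rw [hee]; simp)
    have he1 : 1 ≤ (myEnt G R A).ncard := by
      rw [Nat.one_le_iff_ne_zero, ← Nat.pos_iff_ne_zero]
      exact (Set.ncard_pos (Set.toFinite _)).mpr hene
    -- apply induction hypothesis to A \ {v} with boundary insert v B
    have hih := ih (insert v B)
      (by
        intro u x hu hadj hx
        by_cases hxv : x = v
        · exact hxv ▸ Set.mem_insert _ _
        · refine Set.mem_insert_of_mem _ (hB2 u x hu.1 hadj ?_)
          intro hxA
          exact hx ⟨hxA, hxv⟩)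
      (by
        have := Set.ncard_insert_le v B
        omega)
      (fun h' => hv0 h'.1)
    -- relate counts and entries of A \ {v} to those of A
    have hcnt : (myCnt G k d R A).ncard ≤ (myCnt G k d R (A \ {v})).ncard + 1 := by
      have hsub : myCnt G k d R A ⊆ insert v (myCnt G k d R (A \ {v}))  := by
        rintro u ⟨huA, hdeg, x, hxR, hadj⟩
        by_cases huv : u = v
        · exact huv ▸ Set.mem_insert _ _
        · exact Set.mem_insert_of_mem _ ⟨⟨huA, huv⟩, hdeg, x, hxR, hadj⟩
      have h1 := Set.ncard_le_ncard hsub (Set.toFinite _)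
      have h2 := Set.ncard_insert_le v (myCnt G k d R (A \ {v}))
      omega
    have hent : (myEnt G R (A \ {v})).ncard ≤ (myEnt G R A).ncard + (k + d) := by
      by_cases hvR : v ∈ R
      · have hsub : myEnt G R (A \ {v}) ⊆
            myEnt G R A ∪ (Prod.mk v '' (G.neighborSet v ∩ A)) := by
          rintro ⟨b, x⟩ ⟨hbR, hbA, hxA, hadj⟩
          by_cases hbAA : b ∈ A
          · have hbv : b = v := by
              by_contra hne
              exact hbA ⟨hbAA, hne⟩
            subst hbv
            exact Or.inr ⟨x, ⟨hadj, hxA.1⟩, rfl⟩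
          · exact Or.inl ⟨hbR, hbAA, hxA.1, hadj⟩
        have h1 := Set.ncard_le_ncard hsub (Set.toFinite _)
        have h2 := Set.ncard_union_le (myEnt G R A) (Prod.mk v '' (G.neighborSet v ∩ A))
        have h3 : (Prod.mk v '' (G.neighborSet v ∩ A)).ncard ≤ k + d := by
          rw [Set.ncard_image_of_injective _ (fun x y hh => congrArg Prod.snd hh)]
          refine le_trans (Set.ncard_le_ncard Set.inter_subset_left (Set.toFinite _)) ?_
          exact hRlow v hvR
        omega
      · have hsub : myEnt G R (A \ {v}) ⊆ myEnt G R A := by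
          rintro ⟨b, x⟩ ⟨hbR, hbA, hxA, hadj⟩
          refine ⟨hbR, ?_, hxA.1, hadj⟩
          intro hbAA
          have hbv : b = v := by
            by_contra hne
            exact hbA ⟨hbAA, hne⟩
          exact hvR (hbv ▸ hbR)
        have := Set.ncard_le_ncard hsub (Set.toFinite _)
        omega
    -- arithmetic
    set e := (myEnt G R A).ncard with hedef
    set P := (k + d + 2) ^ j with hP
    have hP1 : 1 ≤ P := Nat.one_le_pow _ _ (by omega)
    calc (myCnt G k d R A).ncard ≤ (myCnt G k d R (A \ {v})).ncard + 1 := hcnt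
      _ ≤ (myEnt G R (A \ {v})).ncard * P + 1 := by omega
      _ ≤ (e + (k + d)) * P + 1 := by
          have := Nat.mul_le_mul_right P hent
          omega
      _ ≤ (e + (k + d) + 1) * P := by
          have hq : (e + (k + d) + 1) * P = (e + (k + d)) * P + P := by ring
          omega
      _ ≤ (e * (k + d + 2)) * P := by
          refine Nat.mul_le_mul_right P ?_
          have h1 : 1 * (k + d) ≤ e * (k + d) := Nat.mul_le_mul_right _ he1
          have h3 : e * (k + d + 2) = e * (k + d) + e * 2 := by ring
          omega
      _ = e * (k + d + 2) ^ (j + 1) := by rw [pow_succ]; ring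
  | disconn A j hd hc h ih =>
    intro B hB2 hB3 hv0
    classical
    have hcompsfin : {C | IsCompOf G A C}.Finite :=
      (Set.Finite.finite_subsets A.toFinite).subset (fun C hC => hC.2.1)
    set F := hcompsfin.toFinset with hF
    have hmemF : ∀ C, C ∈ F ↔ IsCompOf G A C := fun C => hcompsfin.mem_toFinset
    -- counts are covered by component counts
    have hcover : myCnt G k d R A ⊆ ⋃ C ∈ F, myCnt G k d R C := by
      rintro u ⟨huA, hdeg, x, hxR, hadj⟩
      obtain ⟨C, hC, huC⟩ := my_exists_comp_mem (G := G) huA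
      exact Set.mem_biUnion ((hmemF C).mpr hC) ⟨huC, hdeg, x, hxR, hadj⟩
    -- component entry sets are disjoint subsets of the entry set of A
    have hentsub : ∀ C, IsCompOf G A C → myEnt G R C ⊆ myEnt G R A := by
      rintro C hC ⟨b, x⟩ ⟨hbR, hbC, hxC, hadj⟩
      refine ⟨hbR, ?_, hC.2.1 hxC, hadj⟩
      intro hbA
      exact my_comp_not_adj_out hC hxC hbA hbC hadj.symm
    have hentdisj : ∀ C ∈ F, ∀ C' ∈ F, C ≠ C' →
        Disjoint (myEnt G R C) (myEnt G R C') := by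
      intro C hCF C' hCF' hne
      rw [Set.disjoint_left]
      rintro ⟨b, x⟩ ⟨_, _, hxC, _⟩ ⟨_, _, hxC', _⟩
      exact hne (my_comp_eq_of_mem ((hmemF C).mp hCF) ((hmemF C').mp hCF') hxC hxC')
    -- per component bound from the induction hypothesis
    have hper : ∀ C ∈ F, (myCnt G k d R C).ncard ≤
        (myEnt G R C).ncard * (k + d + 2) ^ j := by
      intro C hCF
      have hC := (hmemF C).mp hCF
      refine ih C hC B ?_ hB3 (fun hvC => hv0 (hC.2.1 hvC))
      intro u x hu hadj hx
      by_cases hxA : x ∈ A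
      · exact absurd hadj (my_comp_not_adj_out hC hu hxA hx)
      · exact hB2 u x (hC.2.1 hu) hadj hxA
    calc (myCnt G k d R A).ncard
        ≤ (⋃ C ∈ F, myCnt G k d R C).ncard :=
          Set.ncard_le_ncard hcover (Set.toFinite _)
      _ ≤ ∑ C ∈ F, (myCnt G k d R C).ncard := my_ncard_biUnion_le F _
      _ ≤ ∑ C ∈ F, (myEnt G R C).ncard * (k + d + 2) ^ j := Finset.sum_le_sum hper
      _ = (∑ C ∈ F, (myEnt G R C).ncard) * (k + d + 2) ^ j := by
          rw [Finset.sum_mul]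
      _ ≤ (⋃ C ∈ F, myEnt G R C).ncard * (k + d + 2) ^ j := by
          exact Nat.mul_le_mul_right _ (my_sum_ncard_le F _ hentdisj)
      _ ≤ (myEnt G R A).ncard * (k + d + 2) ^ j := by
          refine Nat.mul_le_mul_right _ (Set.ncard_le_ncard ?_ (Set.toFinite _))
          refine Set.iUnion₂_subset ?_
          intro C hCF
          exact hentsub C ((hmemF C).mp hCF)

end MyQL

section MyML

variable {V : Type*}

/-- high-degree vertices of `A`, as torso vertices -/
def mySet (G : SimpleGraph V) (m : ℕ) (A : Set V) : Set {v : V // m < gdeg G v} :=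
  {u | u.1 ∈ A}

/-- torso vertices of `A` exposed to the outside of `A` through low-degree walks -/
def myExp (G : SimpleGraph V) (m : ℕ) (A : Set V) : Set {v : V // m < gdeg G v} :=
  {u | ∃ b, b ∉ A ∧ ∃ p : G.Walk u.1 b, ∀ w ∈ p.support, w ≠ u.1 → gdeg G w ≤ m}

/-- the low-degree region attached to `v` -/
def myR (G : SimpleGraph V) (m : ℕ) (v : V) : Set V :=
  {x | gdeg G x ≤ m ∧ ∃ q : G.Walk x v, ∀ w ∈ q.support, gdeg G w ≤ m}

variable {G : SimpleGraph V}

lemma myR_low {m : ℕ} {v : V} : ∀ x ∈ myR G m v, gdeg G x ≤ m := fun _ hx => hx.1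

lemma myR_conn {m : ℕ} {v : V} :
    ∀ x ∈ myR G m v, ∃ p : G.Walk x v, ∀ w ∈ p.support, w ∈ myR G m v := by
  classical
  rintro x ⟨_, q, hq⟩
  refine ⟨q, fun w hw => ⟨hq w hw, q.dropUntil w hw, fun z hz => ?_⟩⟩
  exact hq z (SimpleGraph.Walk.support_dropUntil_subset q hw hz)

lemma my_exp_comp {m : ℕ} {A C : Set V} (hC : IsCompOf G A C)
    {u : {v : V // m < gdeg G v}} (hu : u.1 ∈ C) :
    u ∈ myExp G m C ↔ u ∈ myExp G m A := by
  constructor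
  · rintro ⟨b, hb, p, hp⟩
    obtain ⟨b', hb'C, ⟨a, haC, hadjab⟩, q, hqsub, -⟩ := my_exists_truncation p hu hb
    have hb'A : b' ∉ A := fun hbA => (my_comp_not_adj_out hC haC hbA hb'C) hadjab
    exact ⟨b', hb'A, q, fun w hw hwu => hp w (hqsub w hw) hwu⟩
  · rintro ⟨b, hb, p, hp⟩
    exact ⟨b, fun hbC => hb (hC.2.1 hbC), p, hp⟩

/-- newly exposed vertices after deleting `v` attach to the region of `v` -/
lemma my_new_exposed {m : ℕ} {A : Set V} {v : V}
    {u : {x : V // m < gdeg G x}} (huv : u.1 ≠ v)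
    (hexp' : u ∈ myExp G m (A \ {v})) (hexp : u ∉ myExp G m A) :
    gdeg G v ≤ m ∧ ∃ x ∈ myR G m v, G.Adj u.1 x := by
  classical
  obtain ⟨b, hb, p, hp⟩ := hexp'
  have hallA : ∀ w ∈ p.support, w ∈ A := by
    intro w hw
    by_contra hwA
    exact hexp ⟨w, hwA, p.takeUntil w hw,
      fun z hz hzu => hp z (SimpleGraph.Walk.support_takeUntil_subset p hw hz) hzu⟩
  have hbv : b = v := by
    have hbA : b ∈ A := hallA b p.end_mem_support
    by_contra hne
    exact hb ⟨hbA, hne⟩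
  subst hbv
  have hvlow : gdeg G b ≤ m := hp b p.end_mem_support (fun e => huv e.symm)
  refine ⟨hvlow, ?_⟩
  have hpath := p.bypass_isPath
  have hsupb := p.support_bypass_subset
  obtain ⟨x, hadj, q, heq⟩ := SimpleGraph.Walk.exists_eq_cons_of_ne huv p.bypass
  rw [heq, SimpleGraph.Walk.cons_isPath_iff] at hpath
  have hqsub : ∀ w ∈ q.support, w ∈ p.support := by
    intro w hw
    refine hsupb ?_
    rw [heq, SimpleGraph.Walk.support_cons]
    exact List.mem_cons_of_mem _ hw
  have hxlow : ∀ w ∈ q.support, gdeg G w ≤ m := by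
    intro w hw
    refine hp w (hqsub w hw) ?_
    intro hwe
    exact hpath.2 (hwe ▸ hw)
  exact ⟨x, ⟨hxlow x q.start_mem_support, q, hxlow⟩, hadj⟩

lemma my_ML [Finite V] (k d : ℕ) :
    ∀ {A : Set V} {j : ℕ}, EdLE G d A j →
    ∀ B : Set V, (∀ u x, u ∈ A → G.Adj u x → x ∉ A → x ∈ B) → B.ncard + j ≤ k →
    TdLE (ATorso G (k + d)) (mySet G (k + d) A \ myExp G (k + d) A)
      (j * (1 + k * (k + d) * (k + d + 2) ^ (k - 1))) := by
  intro A j hed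
  induction hed with
  | base A j hbase =>
    intro B hB2 hB3
    have hempty : mySet G (k + d) A \ myExp G (k + d) A = ∅ := by
      refine Set.eq_empty_iff_forall_notMem.mpr ?_
      rintro u ⟨hu, -⟩
      exact absurd (my_base_no_high hbase hB2 hB3 u.1 hu) (not_le.mpr u.2)
    rw [hempty]
    exact TdLE.empty _
  | conn A j hd hc v hv h ih =>
    intro B hB2 hB3
    have hB2' : ∀ u x, u ∈ A \ {v} → G.Adj u x → x ∉ A \ {v} → x ∈ insert v B := by
      intro u x hu hadj hx
      by_cases hxv : x = v
      · exact hxv ▸ Set.mem_insert _ _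
      · refine Set.mem_insert_of_mem _ (hB2 u x hu.1 hadj ?_)
        intro hxA
        exact hx ⟨hxA, hxv⟩
    have hB3' : (insert v B).ncard + j ≤ k := by
      have := Set.ncard_insert_le v B
      omega
    have hih := ih (insert v B) hB2' hB3'
    set c := 1 + k * (k + d) * (k + d + 2) ^ (k - 1) with hc_def
    set S := mySet G (k + d) A \ myExp G (k + d) A with hS_def
    set S' := mySet G (k + d) (A \ {v}) \ myExp G (k + d) (A \ {v}) with hS'_def
    set D := S \ S' with hD_def
    have h0 : S \ D ⊆ S' := by
      intro u hu
      rcases Classical.em (u ∈ S') with h' | h'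
      · exact h'
      · exact absurd ⟨hu.1, h'⟩ hu.2
    have h1 : TdLE (ATorso G (k + d)) (S \ D) (j * c) := my_tdle_subset hih _ h0
    have h2 := my_tdle_delete h1
    refine my_tdle_mono h2 ?_
    suffices hD : (S ∩ D).ncard ≤ c by
      have heq : (j + 1) * c = j * c + c := by ring
      omega
    have hDb : (S ∩ D).ncard ≤ D.ncard :=
      Set.ncard_le_ncard Set.inter_subset_right (Set.toFinite _)
    -- key: elements of D with value ≠ v are in the count set of the region of v
    have hkey : ∀ u ∈ D, u.1 ≠ v →
        gdeg G v ≤ k + d ∧ u.1 ∈ myCnt G k d (myR G (k + d) v) (A \ {v}) := by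
      intro u huD huv
      obtain ⟨⟨huA, hnexpA⟩, hnotS'⟩ := huD
      have huA' : u.1 ∈ A \ {v} := ⟨huA, huv⟩
      have hexp' : u ∈ myExp G (k + d) (A \ {v}) := by
        by_contra hne
        exact hnotS' ⟨huA', hne⟩
      obtain ⟨hvlow, x, hxR, hadj⟩ := my_new_exposed huv hexp' hnexpA
      exact ⟨hvlow, huA', u.2, x, hxR, hadj⟩
    by_cases hvlow : gdeg G v ≤ k + d
    · -- v has low degree: D injects into the count set, use my_QL
      have hval : Subtype.val '' D ⊆ myCnt G k d (myR G (k + d) v) (A \ {v}) := by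
        rintro x ⟨u, huD, rfl⟩
        have huv : u.1 ≠ v := by
          intro e
          have := u.2
          rw [e] at this
          omega
        exact (hkey u huD huv).2
      have hQL := my_QL k d (myR G (k + d) v) v myR_low myR_conn h
        (insert v B) hB2' hB3' (fun hh => hh.2 rfl)
      have hpc : (myEnt G (myR G (k + d) v) (A \ {v})).ncard ≤
          (insert v B).ncard * (k + d) := by
        refine my_pairs_card_le (Set.toFinite _) _ ?_ ?_
        · rintro ⟨b, x⟩ ⟨hbR, hbA, hxA, hadj⟩
          exact hB2' x b hxA hadj.symm hbA
        · intro b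
          rcases Set.eq_empty_or_nonempty {x | (b, x) ∈ myEnt G (myR G (k + d) v) (A \ {v})}
            with he | ⟨x0, hx0⟩
          · rw [he]; simp
          · have hbR : b ∈ myR G (k + d) v := hx0.1
            refine le_trans (Set.ncard_le_ncard ?_ (Set.toFinite _)) (myR_low b hbR)
            intro x hx
            exact hx.2.2.2
      have hcard : D.ncard = (Subtype.val '' D).ncard :=
        (Set.ncard_image_of_injective D Subtype.val_injective).symm
      have hchain : D.ncard ≤ (insert v B).ncard * (k + d) * (k + d + 2) ^ j := by
        rw [hcard]
        calc (Subtype.val '' D).ncard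
            ≤ (myCnt G k d (myR G (k + d) v) (A \ {v})).ncard :=
              Set.ncard_le_ncard hval (Set.toFinite _)
          _ ≤ (myEnt G (myR G (k + d) v) (A \ {v})).ncard * (k + d + 2) ^ j := hQL
          _ ≤ (insert v B).ncard * (k + d) * (k + d + 2) ^ j :=
              Nat.mul_le_mul_right _ hpc
      have hnum : (insert v B).ncard * (k + d) * (k + d + 2) ^ j ≤
          k * (k + d) * (k + d + 2) ^ (k - 1) := by
        have ha : (insert v B).ncard ≤ k := by
          have := Set.ncard_insert_le v B
          omega
        have hb2 : (k + d + 2) ^ j ≤ (k + d + 2) ^ (k - 1) :=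
          Nat.pow_le_pow_right (by omega) (by omega)
        exact Nat.mul_le_mul (Nat.mul_le_mul_right _ ha) hb2
      omega
    · -- v has high degree: D is contained in the singleton {v}
      have hsub : D ⊆ {⟨v, not_le.mp hvlow⟩} := by
        intro u huD
        by_contra hne
        have huv : u.1 ≠ v := by
          intro e
          exact hne (by simp only [Set.mem_singleton_iff]; exact Subtype.ext e)
        exact hvlow (hkey u huD huv).1
      have : D.ncard ≤ 1 := by
        have := Set.ncard_le_ncard hsub (Set.toFinite _)
        simpa using this
      omega
  | disconn A j hd hc h ih =>
    intro B hB2 hB3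
    classical
    have hcover : mySet G (k + d) A \ myExp G (k + d) A =
        ⋃₀ ((fun C => mySet G (k + d) C \ myExp G (k + d) C) '' {C | IsCompOf G A C}) := by
      ext u
      constructor
      · rintro ⟨hu1, hu2⟩
        obtain ⟨C, hC, huC⟩ := my_exists_comp_mem (G := G) hu1
        exact ⟨_, ⟨C, hC, rfl⟩, huC, fun hexpC => hu2 ((my_exp_comp hC huC).mp hexpC)⟩
      · rintro ⟨P, ⟨C, hC, rfl⟩, huC, hnexp⟩
        exact ⟨hC.2.1 huC, fun hexpA => hnexp ((my_exp_comp hC huC).mpr hexpA)⟩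
    rw [hcover]
    refine my_tdle_glue ?_ ?_
    · rintro P ⟨C, hC, rfl⟩
      refine ih C hC B ?_ hB3
      intro u x hu hadj hx
      by_cases hxA : x ∈ A
      · exact absurd hadj (my_comp_not_adj_out hC hu hxA hx)
      · exact hB2 u x (hC.2.1 hu) hadj hxA
    · rintro P ⟨C, hC, rfl⟩ Q ⟨C', hC', rfl⟩ hne u hu w hw hadj
      have hCC' : C ≠ C' := fun hq => hne (by rw [hq])
      obtain ⟨hne2, p, hp, hlow⟩ := hadj
      have hw1 : w.1 ∉ C := fun hmem => hCC' (my_comp_eq_of_mem hC hC' hmem hw.1)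
      obtain ⟨b', hb'C, ⟨a, haC, hadjab⟩, q, hqsub, hqin⟩ :=
        my_exists_truncation p hu.1 hw1
      have hb'A : b' ∉ A := fun hbA => (my_comp_not_adj_out hC haC hbA hb'C) hadjab
      have hb'w : b' ≠ w.1 := fun e => hb'A (e ▸ hC'.2.1 hw.1)
      refine hu.2 ⟨b', hb'C, q, ?_⟩
      intro z hz hzu
      by_cases hzb : z = b'
      · subst hzb
        exact hlow z (hqsub z hz) hzu hb'w
      · have hzC : z ∈ C := hqin z hz hzb
        have hzw : z ≠ w.1 := fun e => hw1 (e ▸ hzC)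
        exact hlow z (hqsub z hz) hzu hzw

lemma my_arith (k d : ℕ) :
    k * (1 + k * (k + d) * (k + d + 2) ^ (k - 1)) ≤ k * ((k + 1) * (k + d)) ^ 2 ^ k := by
  rcases Nat.eq_zero_or_pos k with rfl | hk
  · simp
  refine Nat.mul_le_mul_left k ?_
  have hm1 : 1 ≤ k + d := by omega
  rcases Nat.lt_or_ge k 2 with hk2 | hk2
  · have hk1 : k = 1 := by omega
    subst hk1
    have : (1 + 1) * (1 + d) = 2 * (1 + d) := by ring
    simp only [pow_one, Nat.sub_self, pow_zero, mul_one]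
    nlinarith
  · have hmk : 2 ≤ k + d := by omega
    set m := k + d with hm
    set X := (k + 1) * m with hX
    have hexpand : X = k * m + m := by rw [hX]; ring
    have hkm : 2 * 1 ≤ k * m := Nat.mul_le_mul hk2 hm1
    have hX2 : 2 ≤ X := by omega
    have h1 : m + 2 ≤ X := by omega
    have h2 : k * m ≤ X := by omega
    have h3 : k * m * (m + 2) ^ (k - 1) ≤ X * X ^ (k - 1) :=
      Nat.mul_le_mul h2 (Nat.pow_le_pow_left h1 _)
    have h4 : X * X ^ (k - 1) = X ^ k := by
      rw [← pow_succ']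
      congr 1
      omega
    have h5 : 1 ≤ X ^ k := Nat.one_le_pow _ _ (by omega)
    have h6 : 2 * X ^ k ≤ X ^ (k + 1) := by
      rw [pow_succ']
      exact Nat.mul_le_mul_right _ hX2
    have h7 : X ^ (k + 1) ≤ X ^ 2 ^ k := by
      refine Nat.pow_le_pow_right (by omega) ?_
      have := Nat.lt_two_pow_self (n := k)
      omega
    omega

end MyML


/-- If `G` has elimination distance at most `k` to degree `d`, then the
`(k+d)`-degree torso of `G` has tree-depth at most `k((k+1)(k+d))^(2^k)`. -/
theorem kd_torso_treedepth {V : Type*} [Fintype V] (G : SimpleGraph V)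
    (k d : ℕ) (hed : EdLE G d Set.univ k) :
    TdLE (ATorso G (k + d)) Set.univ (k * ((k + 1) * (k + d)) ^ (2 ^ k)) := by
  have h := my_ML k d hed ∅ (fun u x _ _ hx => absurd (Set.mem_univ x) hx) (by simp)
  have h1 : mySet G (k + d) (Set.univ : Set V) = Set.univ := by
    ext u; simp [mySet]
  have h2 : myExp G (k + d) (Set.univ : Set V) = ∅ := by
    refine Set.eq_empty_iff_forall_notMem.mpr ?_
    rintro u ⟨b, hb, -⟩
    exact hb (Set.mem_univ b)
  rw [h1, h2, Set.diff_empty] at h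
  exact my_tdle_mono h (my_arith k d)
end
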